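/- arXiv:1603.04542 — 3 statements merged into one kernel-verified Lean document; each statement's English description precedes it below -/
import Mathlib

section
/- Let θ > 0 and define the process X by X_i := Z_i − e^{−θ i} Z_0 for i ∈ ℕ. Then for every real p ≥ 1 there exists a constant C = C(p, θ, f_q) such that for all n ≥ 1: ‖ Q_{f_q,n}(X) − Q_{f_q,n}(Z) ‖_{L^p(Ω)} ≤ C/n. -/
open MeasureTheory ProbabilityTheory Filter
open scoped NNReal ENNReal

noncomputable section

variable {Ω : Type*} [MeasureSpace Ω]

/-- `Z` is a centered stationary Gaussian sequence with covariance `r`. -/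
def IsCSG (Z : ℤ → Ω → ℝ) (r : ℤ → ℝ) : Prop :=
  (∀ k, Measurable (Z k)) ∧
  (∀ (s : Finset ℤ) (a : ℤ → ℝ), ∃ v : ℝ≥0,
    Measure.map (fun ω => ∑ k ∈ s, a k * Z k ω) (ℙ : Measure Ω) = gaussianReal 0 v) ∧
  (∀ j k : ℤ, ∫ ω, Z j ω * Z k ω = r (k - j)) ∧
  0 < r 0

/-- `m`-th probabilists' Hermite polynomial, as a function on `ℝ`. -/
def hermiteFun (m : ℕ) (x : ℝ) : ℝ := Polynomial.aeval x (Polynomial.hermite m)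

/-- The polynomial `f_q(x) = ∑_{k=0}^{q/2} d_{2k} He_{2k}(x/√r0)`. -/
def fpoly (r0 : ℝ) (d : ℕ → ℝ) (q : ℕ) (x : ℝ) : ℝ :=
  ∑ k ∈ Finset.range (q / 2 + 1), d (2 * k) * hermiteFun (2 * k) (x / Real.sqrt r0)

/-- Polynomial variation `Q_{f,n}(X)`. -/
def Qvar (f : ℝ → ℝ) (X : ℤ → Ω → ℝ) (n : ℕ) (ω : Ω) : ℝ :=
  (1 / (n : ℝ)) * ∑ i ∈ Finset.range n, f (X (i : ℤ) ω)

/-- `λ_f(X) = E[f(X_0)]`. -/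
def lamE (f : ℝ → ℝ) (X : ℤ → Ω → ℝ) : ℝ := ∫ ω, f (X 0 ω)

/-- `U_{f,n}(X) = √n (Q_{f,n}(X) − λ_f(X))`. -/
def Ustat (f : ℝ → ℝ) (X : ℤ → Ω → ℝ) (n : ℕ) (ω : Ω) : ℝ :=
  Real.sqrt n * (Qvar f X n ω - lamE f X)

/-- Variance of `U_{f,n}(X)`. -/
def varU (f : ℝ → ℝ) (X : ℤ → Ω → ℝ) (n : ℕ) : ℝ := ∫ ω, (Ustat f X n ω) ^ 2

/-- Standardized statistic `F_{f,n}(X)`. -/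
def Fstat (f : ℝ → ℝ) (X : ℤ → Ω → ℝ) (n : ℕ) (ω : Ω) : ℝ :=
  Ustat f X n ω / Real.sqrt (varU f X n)

/-- fourth cumulant `κ₄(X) = E[X⁴] − 3 (E[X²])²` of a centered random variable. -/
def kappa4 (X : Ω → ℝ) : ℝ := (∫ ω, X ω ^ 4) - 3 * (∫ ω, X ω ^ 2) ^ 2

/-- third cumulant `κ₃(X) = E[X³]`. -/
def kappa3 (X : Ω → ℝ) : ℝ := ∫ ω, X ω ^ 3

/-- `u_{f_q}(Z) = ∑_{k=1}^{q/2} d_{2k}² (2k)! ∑_{j∈ℤ} (r(j)/r(0))^{2k}`. -/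
def ufq (r : ℤ → ℝ) (d : ℕ → ℝ) (q : ℕ) : ℝ :=
  ∑ k ∈ Finset.Icc 1 (q / 2),
    (d (2 * k)) ^ 2 * (Nat.factorial (2 * k)) * ∑' j : ℤ, (r j / r 0) ^ (2 * k)

/-- Total variation distance between two laws on `ℝ`. -/
def dTV (μ ν : Measure ℝ) : ℝ :=
  ⨆ A : {A : Set ℝ // MeasurableSet A}, |(μ A.1).toReal - (ν A.1).toReal|

/-- Wasserstein distance between two laws on `ℝ`. -/
def dW (μ ν : Measure ℝ) : ℝ :=
  ⨆ f : {f : ℝ → ℝ // LipschitzWith 1 f}, |(∫ x, f.1 x ∂μ) - ∫ x, f.1 x ∂ν|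

/-- The quadratic function `f₂(x) = x²`. -/
def f2 : ℝ → ℝ := fun x => x ^ 2

/-- `U_{f₂,n}(X) = √n (Q_{f₂,n}(X) − r(0))`, quadratic case. -/
def U2 (X : ℤ → Ω → ℝ) (r0 : ℝ) (n : ℕ) (ω : Ω) : ℝ :=
  Real.sqrt n * (Qvar f2 X n ω - r0)

/-- Variance of `U_{f₂,n}`. -/
def varU2 (X : ℤ → Ω → ℝ) (r0 : ℝ) (n : ℕ) : ℝ := ∫ ω, (U2 X r0 n ω) ^ 2

/-- Standardized quadratic statistic `F_{f₂,n}`. -/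
def F2stat (X : ℤ → Ω → ℝ) (r0 : ℝ) (n : ℕ) (ω : Ω) : ℝ :=
  U2 X r0 n ω / Real.sqrt (varU2 X r0 n)

/-- `p`-th order finite difference of a sequence of processes. -/
def fdiff : ℕ → (ℤ → Ω → ℝ) → (ℤ → Ω → ℝ)
  | 0, Z => Z
  | (p + 1), Z => fun k ω => fdiff p Z (k + 1) ω - fdiff p Z k ω

section GaussHelpers
open Real

lemma abs_pow_le_one_add_pow (x : ℝ) (m : ℕ) : |x| ^ m ≤ 1 + x ^ (2 * m) := by
  have h2 : x ^ (2 * m) = |x| ^ (2 * m) := by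
    rw [← abs_pow]
    rw [abs_of_nonneg (Even.pow_nonneg ⟨m, by ring⟩ x)]
  rw [h2]
  rcases le_total (|x|) 1 with h | h
  · have : |x| ^ m ≤ 1 := pow_le_one₀ (abs_nonneg x) h
    nlinarith [pow_nonneg (abs_nonneg x) (2*m)]

  · have : |x| ^ m ≤ |x| ^ (2 * m) := pow_le_pow_right₀ h (by omega)
    linarith

lemma integrable_abs_pow_gaussian (v : ℝ≥0) (m : ℕ) :
    Integrable (fun x : ℝ => |x| ^ m) (gaussianReal 0 v) := by
  by_cases hv : v = 0
  · subst hv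
    rw [gaussianReal_zero_var]
    refine ⟨(measurable_abs.pow_const m).aestronglyMeasurable, ?_⟩
    rw [HasFiniteIntegral, lintegral_dirac]
    exact ENNReal.coe_lt_top
  · rw [gaussianReal_of_var_ne_zero _ hv,
      integrable_withDensity_iff (measurable_gaussianPDF _ _)
        (ae_of_all _ fun x => ENNReal.ofReal_lt_top)]
    have hb : (0:ℝ) < (2 * (v:ℝ))⁻¹ := by
      have : (0:ℝ) < (v:ℝ) := lt_of_le_of_ne v.coe_nonneg (by exact_mod_cast (Ne.symm hv))
      positivity
    set b : ℝ := (2 * (v:ℝ))⁻¹ with hbdef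
    have hInt1 : Integrable (fun x : ℝ => rexp (-b * x ^ 2)) := integrable_exp_neg_mul_sq hb
    have hInt2 : Integrable (fun x : ℝ => x ^ (2 * m) * rexp (-b * x ^ 2)) := by
      have := integrable_rpow_mul_exp_neg_mul_sq (s := ((2 * m : ℕ) : ℝ)) hb
        (by have : (0:ℝ) ≤ ((2 * m : ℕ) : ℝ) := Nat.cast_nonneg _; linarith)
      convert this using 2 with x
      rw [Real.rpow_natCast]
    have hIntg : Integrable (fun x : ℝ =>
        (√(2 * π * v))⁻¹ * (rexp (-b * x ^ 2) + x ^ (2 * m) * rexp (-b * x ^ 2))) :=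
      (hInt1.add hInt2).const_mul _
    refine hIntg.mono' ?_ (ae_of_all _ fun x => ?_)
    · refine ((measurable_abs.pow_const m).mul ?_).aestronglyMeasurable
      exact (measurable_gaussianPDF 0 v).ennreal_toReal
    · have hpdf : ((gaussianPDF 0 v x).toReal) = gaussianPDFReal 0 v x :=
        ENNReal.toReal_ofReal (gaussianPDFReal_nonneg 0 v x)
      have hexp : gaussianPDFReal 0 v x = (√(2 * π * v))⁻¹ * rexp (-b * x ^ 2) := by
        rw [gaussianPDFReal]
        congr 1
        congr 1
        rw [hbdef]
        field_simp
        ring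
      rw [Real.norm_eq_abs, abs_mul, hpdf]
      have h1 : |(|x| ^ m)| = |x| ^ m := abs_of_nonneg (by positivity)
      have h2 : |gaussianPDFReal 0 v x| = gaussianPDFReal 0 v x :=
        abs_of_nonneg (gaussianPDFReal_nonneg 0 v x)
      rw [h1, h2, hexp]
      have hc : (0:ℝ) ≤ (√(2 * π * v))⁻¹ := by positivity
      have he : (0:ℝ) ≤ rexp (-b * x ^ 2) := (Real.exp_pos _).le
      have := abs_pow_le_one_add_pow x m
      calc |x| ^ m * ((√(2 * π * v))⁻¹ * rexp (-b * x ^ 2))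
          ≤ (1 + x ^ (2*m)) * ((√(2 * π * v))⁻¹ * rexp (-b * x ^ 2)) := by
            apply mul_le_mul_of_nonneg_right this (by positivity)
        _ = (√(2 * π * v))⁻¹ * (rexp (-b * x ^ 2) + x ^ (2 * m) * rexp (-b * x ^ 2)) := by ring


lemma memℒp_id_gaussian (v : ℝ≥0) (t : ℝ) :
    MemLp (id : ℝ → ℝ) (ENNReal.ofReal t) (gaussianReal 0 v) := by
  obtain ⟨m, hm⟩ := exists_nat_ge t
  have h1 : MemLp (id : ℝ → ℝ) ((m + 1 : ℕ) : ℝ≥0∞) (gaussianReal 0 v) := by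
    refine ⟨measurable_id.aestronglyMeasurable, ?_⟩
    rw [eLpNorm_lt_top_iff_lintegral_rpow_enorm_lt_top (by exact_mod_cast Nat.succ_ne_zero m)
      (ENNReal.natCast_ne_top _)]
    have hInt := (integrable_abs_pow_gaussian v (m + 1)).2
    rw [HasFiniteIntegral] at hInt
    refine lt_of_eq_of_lt ?_ hInt
    apply lintegral_congr fun x => ?_
    rw [show ((m + 1 : ℕ) : ℝ≥0∞).toReal = ((m + 1 : ℕ) : ℝ) from rfl, ENNReal.rpow_natCast]
    simp [enorm_pow]
  exact h1.mono_exponent (by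
    calc ENNReal.ofReal t ≤ ENNReal.ofReal ((m:ℝ) + 1) :=
          ENNReal.ofReal_le_ofReal (by linarith)
      _ = ((m + 1 : ℕ) : ℝ≥0∞) := by
          rw [← ENNReal.ofReal_natCast (m+1)]; norm_num)

lemma integral_sq_gaussian (v : ℝ≥0) :
    ∫ x, x ^ 2 ∂(gaussianReal 0 v) = (v : ℝ) * ∫ x, x ^ 2 ∂(gaussianReal 0 1) := by
  have hmap : (gaussianReal 0 1).map ((Real.sqrt v) * ·) = gaussianReal 0 v := by
    rw [gaussianReal_map_const_mul]
    congr 1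
    · simp
    · ext
      simp [Real.sq_sqrt v.coe_nonneg]
  rw [← hmap, integral_map (by fun_prop) (by fun_prop)]
  have : ∀ x : ℝ, (Real.sqrt v * x) ^ 2 = (v:ℝ) * x ^ 2 := by
    intro x; rw [mul_pow, Real.sq_sqrt v.coe_nonneg]
  simp_rw [this]
  rw [MeasureTheory.integral_const_mul]

lemma integral_sq_gaussian_one_pos : 0 < ∫ x, x ^ 2 ∂(gaussianReal 0 1) := by
  have hInt : Integrable (fun x : ℝ => x ^ 2) (gaussianReal 0 1) := by
    have := integrable_abs_pow_gaussian 1 2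
    simpa [sq_abs] using this
  rw [integral_pos_iff_support_of_nonneg (fun x => sq_nonneg x) hInt]
  have hsupp : Function.support (fun x : ℝ => x ^ 2) = {0}ᶜ := by
    ext x; simp [Function.support, pow_eq_zero_iff]
  rw [hsupp]
  by_contra h
  push_neg at h
  have h0 : gaussianReal 0 1 ({0}ᶜ : Set ℝ) = 0 := le_antisymm h zero_le
  have hac := gaussianReal_absolutelyContinuous' 0 (one_ne_zero) h0
  have : (volume : Measure ℝ) (Set.Ioi 0) = 0 :=
    measure_mono_null (fun x hx => by simp; exact ne_of_gt hx) hac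
  rw [Real.volume_Ioi] at this
  exact ENNReal.top_ne_zero this


lemma abs_pow_sub_pow_le_aux (x y : ℝ) (j : ℕ) :
    |x ^ j - y ^ j| ≤ j * |x - y| * (|x| + |y| + 1) ^ j := by
  induction j with
  | zero => simp
  | succ j ih =>
    have hx0 := abs_nonneg x
    have hy0 := abs_nonneg y
    have hS1 : (1:ℝ) ≤ |x| + |y| + 1 := by linarith
    have hS0 : (0:ℝ) ≤ |x| + |y| + 1 := by linarith
    have key : x ^ (j+1) - y ^ (j+1) = x ^ j * (x - y) + y * (x ^ j - y ^ j) := by ring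
    have h1 : |x ^ j * (x - y)| ≤ (|x| + |y| + 1) ^ j * |x - y| := by
      rw [abs_mul, abs_pow]
      apply mul_le_mul_of_nonneg_right _ (abs_nonneg _)
      apply pow_le_pow_left₀ (abs_nonneg x) (by linarith)
    have h2 : |y * (x ^ j - y ^ j)| ≤ (|x| + |y| + 1) * (j * |x - y| * (|x| + |y| + 1) ^ j) := by
      rw [abs_mul]
      apply mul_le_mul (by linarith) ih (abs_nonneg _) hS0
    calc |x ^ (j+1) - y ^ (j+1)| ≤ |x ^ j * (x - y)| + |y * (x ^ j - y ^ j)| := by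
          rw [key]; exact abs_add_le _ _
      _ ≤ (|x| + |y| + 1) ^ j * |x - y|
            + (|x| + |y| + 1) * (j * |x - y| * (|x| + |y| + 1) ^ j) := add_le_add h1 h2
      _ = |x - y| * (|x| + |y| + 1) ^ j * (1 + j * (|x| + |y| + 1)) := by ring
      _ ≤ |x - y| * (|x| + |y| + 1) ^ j * ((j + 1) * (|x| + |y| + 1)) := by
          apply mul_le_mul_of_nonneg_left _ (by positivity)
          have : ((j:ℝ) + 1) * (|x| + |y| + 1) = j * (|x| + |y| + 1) + (|x| + |y| + 1) := by ring
          linarith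
      _ = (j+1 : ℕ) * |x - y| * (|x| + |y| + 1) ^ (j+1) := by push_cast; ring

lemma poly_diff_bound (P : Polynomial ℝ) :
    ∃ A : ℝ, 0 ≤ A ∧ ∀ x y : ℝ,
      |P.eval x - P.eval y| ≤ A * |x - y| * (|x| + |y| + 1) ^ P.natDegree := by
  set D := P.natDegree
  refine ⟨∑ j ∈ Finset.range (D + 1), |P.coeff j| * j, Finset.sum_nonneg fun j _ => by positivity,
    fun x y => ?_⟩
  have hS1 : (1:ℝ) ≤ |x| + |y| + 1 := by
    have := abs_nonneg x; have := abs_nonneg y; linarith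
  rw [Polynomial.eval_eq_sum_range (p := P) x, Polynomial.eval_eq_sum_range (p := P) y,
    ← Finset.sum_sub_distrib]
  calc |∑ j ∈ Finset.range (D + 1), (P.coeff j * x ^ j - P.coeff j * y ^ j)|
      ≤ ∑ j ∈ Finset.range (D + 1), |P.coeff j * x ^ j - P.coeff j * y ^ j| :=
        Finset.abs_sum_le_sum_abs _ _
    _ ≤ ∑ j ∈ Finset.range (D + 1), |P.coeff j| * j * |x - y| * (|x| + |y| + 1) ^ D := by
        apply Finset.sum_le_sum
        intro j hj
        rw [← mul_sub, abs_mul]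
        have h1 := abs_pow_sub_pow_le_aux x y j
        have hjD : (|x| + |y| + 1) ^ j ≤ (|x| + |y| + 1) ^ D :=
          pow_le_pow_right₀ hS1 (by
            have := Finset.mem_range.mp hj; omega)
        calc |P.coeff j| * |x ^ j - y ^ j|
            ≤ |P.coeff j| * (j * |x - y| * (|x| + |y| + 1) ^ j) :=
              mul_le_mul_of_nonneg_left h1 (abs_nonneg _)
          _ ≤ |P.coeff j| * (j * |x - y| * (|x| + |y| + 1) ^ D) := by
              apply mul_le_mul_of_nonneg_left _ (abs_nonneg _)
              apply mul_le_mul_of_nonneg_left hjD (by positivity)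
          _ = |P.coeff j| * j * |x - y| * (|x| + |y| + 1) ^ D := by ring
    _ = (∑ j ∈ Finset.range (D + 1), |P.coeff j| * j) * |x - y| * (|x| + |y| + 1) ^ D := by
        rw [← Finset.sum_mul, ← Finset.sum_mul]

noncomputable def fP (r0 : ℝ) (d : ℕ → ℝ) (q : ℕ) : Polynomial ℝ :=
  ∑ k ∈ Finset.range (q / 2 + 1),
    Polynomial.C (d (2 * k)) *
      ((Polynomial.hermite (2 * k)).map (Int.castRingHom ℝ)).comp
        (Polynomial.C (Real.sqrt r0)⁻¹ * Polynomial.X)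

lemma fpoly_eq_eval (r0 : ℝ) (d : ℕ → ℝ) (q : ℕ) (x : ℝ) :
    fpoly r0 d q x = (fP r0 d q).eval x := by
  rw [fpoly, fP, Polynomial.eval_finset_sum]
  apply Finset.sum_congr rfl
  intro k _
  rw [Polynomial.eval_mul, Polynomial.eval_C, Polynomial.eval_comp, Polynomial.eval_mul,
    Polynomial.eval_C, Polynomial.eval_X, Polynomial.eval_map, hermiteFun,
    Polynomial.aeval_def]
  rw [div_eq_inv_mul]
  rfl

end GaussHelpers

/-- the non-stationary correction `X_i = Z_i − e^{−θi} Z_0`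
perturbs the polynomial variation by `O(1/n)` in every `L^p` norm. -/
theorem statement_17
    {Ω : Type*} [MeasureSpace Ω] [IsProbabilityMeasure (ℙ : Measure Ω)]
    (Z : ℤ → Ω → ℝ) (r : ℤ → ℝ) (hZ : IsCSG Z r)
    (q : ℕ) (hq : 0 < q) (hqe : q % 2 = 0)
    (d : ℕ → ℝ) (hd : d q = r 0 ^ (q / 2))
    (θ : ℝ) (hθ : 0 < θ)
    (X : ℤ → Ω → ℝ) (hX : ∀ i : ℕ, ∀ ω, X i ω = Z i ω - Real.exp (-θ * i) * Z 0 ω) :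
    ∀ p : ℝ, 1 ≤ p → ∃ C > (0 : ℝ), ∀ n : ℕ, 1 ≤ n →
      (eLpNorm
          (fun ω => Qvar (fpoly (r 0) d q) X n ω - Qvar (fpoly (r 0) d q) Z n ω)
          (ENNReal.ofReal p) (ℙ : Measure Ω)).toReal ≤ C / n := by
  intro p hp
  classical
  obtain ⟨hmeas, hgauss, hcov, hr0⟩ := hZ
  -- laws of the Z k
  have hlaw : ∀ k : ℤ, ∃ v : ℝ≥0, Measure.map (Z k) ℙ = gaussianReal 0 v := by
    intro k
    obtain ⟨v, hv⟩ := hgauss {k} (fun _ => 1)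
    refine ⟨v, ?_⟩
    rw [← hv]
    congr 1
    funext ω
    simp
  choose v hv using hlaw
  set c1 : ℝ := ∫ x, x ^ 2 ∂(gaussianReal 0 1) with hc1def
  have hc1 : 0 < c1 := integral_sq_gaussian_one_pos
  have hvc : ∀ k : ℤ, (v k : ℝ) * c1 = r 0 := by
    intro k
    have h2 : ∫ ω, (Z k ω) ^ 2 = r 0 := by
      have := hcov k k
      simp only [sub_self] at this
      rw [← this]
      congr 1; funext ω; ring
    have hmapint : ∫ x, x ^ 2 ∂(Measure.map (Z k) ℙ) = ∫ ω, (Z k ω) ^ 2 :=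
      integral_map (hmeas k).aemeasurable (by fun_prop)
    rw [hv k, integral_sq_gaussian] at hmapint
    rw [← hc1def] at hmapint
    rw [hmapint, h2]
  have hveq : ∀ k : ℤ, v k = v 0 := by
    intro k
    have h1 := hvc k
    have h0 := hvc 0
    have : (v k : ℝ) = (v 0 : ℝ) := by
      have := h1.trans h0.symm
      exact mul_right_cancel₀ (ne_of_gt hc1) this
    exact_mod_cast this
  set v0 : ℝ≥0 := v 0 with hv0def
  have hlaw0 : ∀ k : ℤ, Measure.map (Z k) ℙ = gaussianReal 0 v0 := fun k => by
    rw [hv k, hveq k]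
  have hZlp : ∀ (t : ℝ) (k : ℤ), eLpNorm (Z k) (ENNReal.ofReal t) ℙ
      = eLpNorm (id : ℝ → ℝ) (ENNReal.ofReal t) (gaussianReal 0 v0) := by
    intro t k
    rw [← hlaw0 k]
    exact (eLpNorm_map_measure measurable_id.aestronglyMeasurable
      (hmeas k).aemeasurable).symm
  -- polynomial bound
  obtain ⟨A, hA0, hPb⟩ := poly_diff_bound (fP (r 0) d q)
  set D : ℕ := (fP (r 0) d q).natDegree with hDdef
  set F : ℝ → ℝ := fpoly (r 0) d q with hFdef
  have hFeval : ∀ x, F x = (fP (r 0) d q).eval x := fpoly_eq_eval (r 0) d q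
  have hFcont : Continuous F := by
    have : F = fun x => (fP (r 0) d q).eval x := funext hFeval
    rw [this]
    exact (fP (r 0) d q).continuous
  set B : ℝ := A * 2 ^ D with hBdef
  have hB0 : 0 ≤ B := by positivity
  -- measurability of X at naturals
  have hXeq : ∀ i : ℕ, X (i : ℤ) = fun ω => Z i ω - Real.exp (-θ * i) * Z 0 ω :=
    fun i => funext (hX i)
  have hXmeas : ∀ i : ℕ, Measurable (X (i : ℤ)) := by
    intro i
    rw [hXeq i]
    exact (hmeas i).sub ((hmeas 0).const_mul _)
  -- the individual terms
  set t : ℕ → Ω → ℝ := fun i ω => F (X (i : ℤ) ω) - F (Z (i : ℤ) ω) with htdef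
  have htmeas : ∀ i : ℕ, Measurable (t i) := fun i =>
    ((hFcont.measurable.comp (hXmeas i)).sub (hFcont.measurable.comp (hmeas i)))
  set g : ℕ → Ω → ℝ := fun i ω => 1 + |Z 0 ω| + |Z (i : ℤ) ω| with hgdef
  have hg0 : ∀ i ω, 0 ≤ g i ω := by
    intro i ω
    have := abs_nonneg (Z 0 ω); have := abs_nonneg (Z (i:ℤ) ω)
    simp only [hgdef]; linarith
  -- pointwise bound
  have hpt : ∀ i : ℕ, ∀ ω, |t i ω| ≤ B * Real.exp (-θ * i) * g i ω ^ (D + 1) := by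
    intro i ω
    set e : ℝ := Real.exp (-θ * i) with hedef
    have he0 : 0 < e := Real.exp_pos _
    have he1 : e ≤ 1 := by
      rw [hedef, Real.exp_le_one_iff]
      have : (0:ℝ) ≤ (i:ℝ) := Nat.cast_nonneg i
      nlinarith
    set x := X (i : ℤ) ω
    set y := Z (i : ℤ) ω
    have hxy : x - y = -(e * Z 0 ω) := by
      simp only [x, y, hX i ω, hedef]; ring
    have habs : |x - y| = e * |Z 0 ω| := by
      rw [hxy, abs_neg, abs_mul, abs_of_pos he0]
    have hxb : |x| ≤ |y| + |Z 0 ω| := by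
      have hx' : x = y - e * Z 0 ω := by linarith [hxy]
      rw [hx']
      calc |y - e * Z 0 ω| ≤ |y| + |e * Z 0 ω| := abs_sub _ _
        _ ≤ |y| + |Z 0 ω| := by
            rw [abs_mul, abs_of_pos he0]
            nlinarith [abs_nonneg (Z 0 ω)]
    have hSg : |x| + |y| + 1 ≤ 2 * g i ω := by
      simp only [hgdef]
      have h1' := abs_nonneg (Z (i:ℤ) ω)
      have h2' := abs_nonneg (Z 0 ω)
      simp only [y] at hxb ⊢
      linarith
    have h1 : |t i ω| ≤ A * |x - y| * (|x| + |y| + 1) ^ D := by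
      simp only [htdef, hFeval]
      exact hPb x y
    have h2 : (|x| + |y| + 1) ^ D ≤ (2 * g i ω) ^ D := by
      apply pow_le_pow_left₀ (by positivity) hSg
    have h3 : |Z 0 ω| ≤ g i ω := by
      simp only [hgdef]
      have := abs_nonneg (Z (i:ℤ) ω)
      linarith
    calc |t i ω| ≤ A * |x - y| * (|x| + |y| + 1) ^ D := h1
      _ = A * (e * |Z 0 ω|) * (|x| + |y| + 1) ^ D := by rw [habs]
      _ ≤ A * (e * |Z 0 ω|) * (2 * g i ω) ^ D := by
          apply mul_le_mul_of_nonneg_left h2 (by positivity)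
      _ = (A * 2 ^ D) * e * (|Z 0 ω| * g i ω ^ D) := by rw [mul_pow]; ring
      _ ≤ (A * 2 ^ D) * e * (g i ω * g i ω ^ D) := by
          apply mul_le_mul_of_nonneg_left _ (by positivity)
          apply mul_le_mul_of_nonneg_right h3 (pow_nonneg (hg0 i ω) D)
      _ = B * e * g i ω ^ (D + 1) := by rw [hBdef, pow_succ]; ring
  -- exponents
  set P : ℝ≥0∞ := ENNReal.ofReal p with hPdef
  have hP1 : 1 ≤ P := by
    rw [hPdef, ← ENNReal.ofReal_one]
    exact ENNReal.ofReal_le_ofReal hp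
  have hP0 : P ≠ 0 := by
    intro h; rw [h] at hP1; simp at hP1
  set s : ℝ≥0∞ := P * ENNReal.ofReal ((D:ℝ) + 1) with hsdef
  have hsOf : s = ENNReal.ofReal (p * ((D:ℝ) + 1)) := by
    rw [hsdef, hPdef, ENNReal.ofReal_mul (by linarith)]
  have hs1 : 1 ≤ s := by
    rw [hsOf, ← ENNReal.ofReal_one]
    apply ENNReal.ofReal_le_ofReal
    have hD1 : (0:ℝ) ≤ (D:ℝ) := Nat.cast_nonneg D
    nlinarith
  have hs0 : s ≠ 0 := by
    intro h; rw [h] at hs1; simp at hs1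
  set K : ℝ≥0∞ := eLpNorm (id : ℝ → ℝ) s (gaussianReal 0 v0) with hKdef
  have hKfin : K ≠ ∞ := by
    rw [hKdef, hsOf]
    exact (memℒp_id_gaussian v0 _).2.ne
  have hprob : (ℙ : Measure Ω) ≠ 0 := IsProbabilityMeasure.ne_zero _
  -- eLpNorm of g i
  have hgbound : ∀ i : ℕ, eLpNorm (g i) s ℙ ≤ 1 + K + K := by
    intro i
    have habsK : ∀ k : ℤ, eLpNorm (fun ω => |Z k ω|) s ℙ = K := by
      intro k
      have : (fun ω => |Z k ω|) = fun ω => ‖Z k ω‖ := by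
        funext ω; rw [Real.norm_eq_abs]
      rw [this, eLpNorm_norm, hKdef, hsOf, hZlp]
    have hone : eLpNorm (fun _ : Ω => (1:ℝ)) s ℙ = 1 := by
      rw [eLpNorm_const _ hs0 hprob]
      simp
    have hm1 : AEStronglyMeasurable (fun _ : Ω => (1:ℝ)) ℙ := aestronglyMeasurable_const
    have hm2 : AEStronglyMeasurable (fun ω => |Z 0 ω|) ℙ := (hmeas 0).abs.aestronglyMeasurable
    have hm3 : AEStronglyMeasurable (fun ω => |Z (i:ℤ) ω|) ℙ :=
      (hmeas (i:ℤ)).abs.aestronglyMeasurable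
    have hsplit : g i = ((fun _ : Ω => (1:ℝ)) + fun ω => |Z 0 ω|) + fun ω => |Z (i:ℤ) ω| := by
      funext ω; simp [hgdef]
    rw [hsplit]
    calc eLpNorm (((fun _ : Ω => (1:ℝ)) + fun ω => |Z 0 ω|) + fun ω => |Z (i:ℤ) ω|) s ℙ
        ≤ eLpNorm ((fun _ : Ω => (1:ℝ)) + fun ω => |Z 0 ω|) s ℙ
          + eLpNorm (fun ω => |Z (i:ℤ) ω|) s ℙ := eLpNorm_add_le (hm1.add hm2) hm3 hs1
      _ ≤ (eLpNorm (fun _ : Ω => (1:ℝ)) s ℙ + eLpNorm (fun ω => |Z 0 ω|) s ℙ)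
          + eLpNorm (fun ω => |Z (i:ℤ) ω|) s ℙ :=
            add_le_add_left (eLpNorm_add_le hm1 hm2 hs1) _
      _ = 1 + K + K := by rw [hone, habsK 0, habsK (i:ℤ)]
  -- eLpNorm of g i ^ (D+1)
  have hpow : ∀ i : ℕ, eLpNorm (fun ω => g i ω ^ (D+1)) P ℙ
      = (eLpNorm (g i) s ℙ) ^ ((D:ℝ)+1) := by
    intro i
    have h := eLpNorm_norm_rpow (g i) (q := ((D:ℝ)+1)) (p := P) (μ := ℙ) (by positivity)
    have hfun : (fun ω => ‖g i ω‖ ^ ((D:ℝ)+1)) = fun ω => g i ω ^ (D+1) := by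
      funext ω
      rw [Real.norm_eq_abs, abs_of_nonneg (hg0 i ω),
        show ((D:ℝ)+1) = ((D+1 : ℕ) : ℝ) by push_cast; ring, Real.rpow_natCast]
    rw [hfun] at h
    rw [h, hsdef]
  -- per-term bound
  have hterm : ∀ i : ℕ, eLpNorm (t i) P ℙ
      ≤ ENNReal.ofReal (B * Real.exp (-θ * i)) * (1 + K + K) ^ ((D:ℝ)+1) := by
    intro i
    have hmono : eLpNorm (t i) P ℙ
        ≤ eLpNorm (fun ω => (B * Real.exp (-θ * i)) * g i ω ^ (D+1)) P ℙ := by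
      apply eLpNorm_mono
      intro ω
      rw [Real.norm_eq_abs, Real.norm_eq_abs,
        abs_of_nonneg (by positivity : (0:ℝ) ≤ (B * Real.exp (-θ * i)) * g i ω ^ (D+1))]
      calc |t i ω| ≤ B * Real.exp (-θ * i) * g i ω ^ (D + 1) := hpt i ω
        _ = (B * Real.exp (-θ * i)) * g i ω ^ (D+1) := by ring
    have hsmul : (fun ω => (B * Real.exp (-θ * i)) * g i ω ^ (D+1))
        = (B * Real.exp (-θ * i)) • (fun ω => g i ω ^ (D+1)) := by
      funext ω; simp [smul_eq_mul]
    rw [hsmul, eLpNorm_const_smul, hpow i] at hmono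
    refine hmono.trans ?_
    have hnn : (‖B * Real.exp (-θ * i)‖ₑ : ℝ≥0∞) = ENNReal.ofReal (B * Real.exp (-θ * i)) := by
      rw [← ofReal_norm, Real.norm_eq_abs, abs_of_nonneg (by positivity)]
    rw [hnn]
    exact mul_le_mul_right (ENNReal.rpow_le_rpow (hgbound i) (by positivity)) _
  -- geometric constant
  set Sgeo : ℝ := (1 - Real.exp (-θ))⁻¹ with hSgdef
  set Cen : ℝ≥0∞ := ENNReal.ofReal (B * Sgeo) * (1 + K + K) ^ ((D:ℝ)+1) with hCendef
  have hCenfin : Cen ≠ ∞ := by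
    rw [hCendef]
    apply ENNReal.mul_ne_top ENNReal.ofReal_ne_top
    apply (ENNReal.rpow_lt_top_of_nonneg (by positivity) ?_).ne
    simp [ENNReal.add_ne_top, hKfin]
  refine ⟨Cen.toReal + 1, by positivity, fun n hn => ?_⟩
  have hn0 : (0:ℝ) < n := by exact_mod_cast hn
  -- rewrite the difference
  have hQ : (fun ω => Qvar F X n ω - Qvar F Z n ω)
      = (1/(n:ℝ)) • (∑ i ∈ Finset.range n, t i) := by
    funext ω
    simp only [Qvar, Pi.smul_apply, Finset.sum_apply, smul_eq_mul, htdef]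
    rw [← mul_sub, ← Finset.sum_sub_distrib]
  have hsum : eLpNorm (∑ i ∈ Finset.range n, t i) P ℙ ≤ Cen := by
    have hgeo : ∑ i ∈ Finset.range n, Real.exp (-θ * i) ≤ Sgeo := by
      have hr1 : Real.exp (-θ) < 1 := by
        rw [Real.exp_lt_one_iff]; linarith
      have hr0 : (0:ℝ) ≤ Real.exp (-θ) := (Real.exp_pos _).le
      have heq : ∑ i ∈ Finset.range n, Real.exp (-θ * i)
          = ∑ i ∈ Finset.range n, Real.exp (-θ) ^ i := by
        apply Finset.sum_congr rfl
        intro i _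
        rw [show -θ * (i:ℝ) = (i:ℝ) * -θ by ring, Real.exp_nat_mul]
      rw [heq, hSgdef]
      calc ∑ i ∈ Finset.range n, Real.exp (-θ) ^ i
          ≤ ∑' i : ℕ, Real.exp (-θ) ^ i :=
            Summable.sum_le_tsum _ (fun i _ => by positivity) (summable_geometric_of_lt_one hr0 hr1)
        _ = (1 - Real.exp (-θ))⁻¹ := tsum_geometric_of_lt_one hr0 hr1
    calc eLpNorm (∑ i ∈ Finset.range n, t i) P ℙ
        ≤ ∑ i ∈ Finset.range n, eLpNorm (t i) P ℙ :=
          eLpNorm_sum_le (fun i _ => (htmeas i).aestronglyMeasurable) hP1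
      _ ≤ ∑ i ∈ Finset.range n,
            ENNReal.ofReal (B * Real.exp (-θ * i)) * (1 + K + K) ^ ((D:ℝ)+1) :=
          Finset.sum_le_sum fun i _ => hterm i
      _ = (∑ i ∈ Finset.range n, ENNReal.ofReal (B * Real.exp (-θ * i)))
            * (1 + K + K) ^ ((D:ℝ)+1) := by rw [Finset.sum_mul]
      _ ≤ ENNReal.ofReal (B * Sgeo) * (1 + K + K) ^ ((D:ℝ)+1) := by
          apply mul_le_mul_left
          rw [← ENNReal.ofReal_sum_of_nonneg (fun i _ => by positivity)]
          apply ENNReal.ofReal_le_ofReal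
          rw [← Finset.mul_sum]
          exact mul_le_mul_of_nonneg_left hgeo hB0
      _ = Cen := by rw [hCendef]
  rw [hQ, eLpNorm_const_smul]
  have hnn2 : (‖(1/(n:ℝ))‖ₑ : ℝ≥0∞) = ENNReal.ofReal (1/(n:ℝ)) := by
    rw [← ofReal_norm, Real.norm_eq_abs, abs_of_nonneg (by positivity)]
  rw [hnn2]
  calc (ENNReal.ofReal (1/(n:ℝ)) * eLpNorm (∑ i ∈ Finset.range n, t i) P ℙ).toReal
      ≤ (ENNReal.ofReal (1/(n:ℝ)) * Cen).toReal := by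
        apply ENNReal.toReal_mono (ENNReal.mul_ne_top ENNReal.ofReal_ne_top hCenfin)
        exact mul_le_mul_right hsum _
    _ = (1/(n:ℝ)) * Cen.toReal := by
        rw [ENNReal.toReal_mul, ENNReal.toReal_ofReal (by positivity)]
    _ ≤ (Cen.toReal + 1) / n := by
        rw [show (1/(n:ℝ)) * Cen.toReal = Cen.toReal / n by ring]
        gcongr
        linarith

end
end

section
/- Let H ∈ (0,1) with H ≠ 1/2 and let m, m' > 0. Then ∫₀^∞ ∫₀^∞ e^{−mu − m'v} ( u^{2H} + v^{2H} − |v − u|^{2H} ) du dv = ( Γ(2H+1) / ( m m' (m + m') ) ) · ( m^{1−2H} + (m')^{1−2H} ), where Γ is the Gamma function. (Equivalently, for the stationary solutions Z^m, Z^{m'} of Ornstein–Uhlenbeck equations driven by the same fractional Brownian motion with Hurst parameter H, E[Z_0^m Z_0^{m'}] = (H Γ(2H)/(m+m'))(m^{1−2H} + (m')^{1−2H}).) -/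
open MeasureTheory Real Set Filter


lemma aux_gamma_int {p b : ℝ} (hp : 0 < p) (hb : 0 < b) :
    ∫ x in Ioi (0:ℝ), x ^ p * Real.exp (-(b * x)) = Real.Gamma (p + 1) / b ^ (p + 1) := by
  have h := Real.integral_rpow_mul_exp_neg_mul_Ioi (a := p + 1) (r := b) (by linarith) hb
  rw [show p + 1 - 1 = p by ring] at h
  rw [h, one_div, Real.inv_rpow hb.le, inv_mul_eq_div]

lemma aux_gamma_integrable {p b : ℝ} (hp : 0 < p) (hb : 0 < b) :
    IntegrableOn (fun x : ℝ => x ^ p * Real.exp (-(b * x))) (Ioi 0) := by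
  have := integrableOn_rpow_mul_exp_neg_mul_rpow (p := 1) (s := p) (b := b)
    (by linarith) zero_lt_one hb
  simpa [Real.rpow_one, neg_mul] using this

lemma aux_exp_int {c : ℝ} (hc : 0 < c) (a : ℝ) :
    ∫ x in Ioi a, Real.exp (-(c * x)) = Real.exp (-(c * a)) / c := by
  have hderiv : ∀ x ∈ Ici a, HasDerivAt (fun x => -Real.exp (-(c * x)) / c)
      (Real.exp (-(c * x))) x := by
    intro x _
    have : HasDerivAt (fun x : ℝ => -(c * x)) (-c) x := by
      exact (((hasDerivAt_id x).const_mul c).neg).congr_deriv (by simp)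
    have := (this.exp.neg.div_const c)
    exact this.congr_deriv (by rw [div_eq_iff hc.ne']; ring)
  have htend : Tendsto (fun x => -Real.exp (-(c * x)) / c) atTop (nhds 0) := by
    have h0 : Tendsto (fun x : ℝ => Real.exp (-c * x)) atTop (nhds 0) :=
      Real.tendsto_exp_atBot.comp (tendsto_id.const_mul_atTop_of_neg (neg_neg_iff_pos.2 hc))
    have := (h0.neg.div_const c)
    simpa [neg_mul] using this
  have := integral_Ioi_of_hasDerivAt_of_tendsto' hderiv
    (by simpa [neg_mul] using exp_neg_integrableOn_Ioi a hc) htend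
  rw [this]; ring

lemma aux_preimage_add (a : ℝ) : (fun x : ℝ => x + a) ⁻¹' Ioi a = Ioi 0 := by
  ext x; simp

lemma aux_shift_integral (f : ℝ → ℝ) (a : ℝ) :
    ∫ x in Ioi a, f x = ∫ x in Ioi (0:ℝ), f (x + a) := by
  have := (measurePreserving_add_right volume a).setIntegral_preimage_emb
    (measurableEmbedding_addRight a) f (Ioi a)
  rw [aux_preimage_add] at this
  exact this.symm

lemma aux_shift_integrable {f : ℝ → ℝ} (a : ℝ)
    (h : IntegrableOn (fun x => f (x + a)) (Ioi 0)) : IntegrableOn f (Ioi a) := by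
  have := (measurePreserving_add_right volume a).integrableOn_comp_preimage
    (measurableEmbedding_addRight a) (f := f) (s := Ioi a)
  rw [aux_preimage_add] at this
  exact this.mp h


lemma aux_cont_rpow {p : ℝ} (hp : 0 < p) : Continuous (fun x : ℝ => x ^ p) := by
  rw [continuous_iff_continuousAt]
  exact fun x => Real.continuousAt_rpow_const x p (Or.inr hp.le)

lemma aux_shift_gamma_val {p c : ℝ} (hp : 0 < p) (hc : 0 < c) (a : ℝ) :
    ∫ x in Ioi a, Real.exp (-(c * x)) * (x - a) ^ p
      = Real.exp (-(c * a)) * (Real.Gamma (p + 1) / c ^ (p + 1)) := by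
  rw [aux_shift_integral]
  have : ∀ x : ℝ, Real.exp (-(c * (x + a))) * (x + a - a) ^ p
      = Real.exp (-(c * a)) * (x ^ p * Real.exp (-(c * x))) := by
    intro x
    rw [show -(c * (x + a)) = -(c * a) + -(c * x) by ring, Real.exp_add]
    ring_nf
  simp_rw [this]
  rw [MeasureTheory.integral_const_mul, aux_gamma_int hp hc]

lemma aux_shift_gamma_intble {p c : ℝ} (hp : 0 < p) (hc : 0 < c) (a : ℝ) :
    IntegrableOn (fun x => Real.exp (-(c * x)) * (x - a) ^ p) (Ioi a) := by
  apply aux_shift_integrable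
  have : ∀ x : ℝ, Real.exp (-(c * (x + a))) * (x + a - a) ^ p
      = Real.exp (-(c * a)) * (x ^ p * Real.exp (-(c * x))) := by
    intro x
    rw [show -(c * (x + a)) = -(c * a) + -(c * x) by ring, Real.exp_add]
    ring_nf
  simp_rw [this]
  exact (aux_gamma_integrable hp hc).const_mul _


lemma aux_abs_int {p c : ℝ} (hp : 0 < p) (hc : 0 < c) {u : ℝ} (hu : 0 < u) :
    IntegrableOn (fun v : ℝ => Real.exp (-(c * v)) * |v - u| ^ p) (Ioi 0) ∧
    (∫ v in Ioi (0:ℝ), Real.exp (-(c * v)) * |v - u| ^ p)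
      = (∫ v in Ioc (0:ℝ) u, Real.exp (-(c * v)) * (u - v) ^ p)
        + Real.exp (-(c * u)) * (Real.Gamma (p + 1) / c ^ (p + 1)) := by
  have hcont : Continuous (fun v : ℝ => Real.exp (-(c * v)) * |v - u| ^ p) := by
    apply Continuous.mul
    · exact (Real.continuous_exp.comp (by continuity))
    · exact (aux_cont_rpow hp).comp (continuous_abs.comp (by continuity))
  have h1 : IntegrableOn (fun v : ℝ => Real.exp (-(c * v)) * |v - u| ^ p) (Ioc 0 u) :=
    hcont.integrableOn_Ioc
  have heq2 : EqOn (fun v : ℝ => Real.exp (-(c * v)) * |v - u| ^ p)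
      (fun v : ℝ => Real.exp (-(c * v)) * (v - u) ^ p) (Ioi u) := by
    intro v hv
    simp only
    rw [abs_of_nonneg (by simp only [mem_Ioi] at hv; linarith)]
  have h2 : IntegrableOn (fun v : ℝ => Real.exp (-(c * v)) * |v - u| ^ p) (Ioi u) :=
    (aux_shift_gamma_intble hp hc u).congr_fun heq2.symm measurableSet_Ioi
  have hsplit : Ioc (0:ℝ) u ∪ Ioi u = Ioi 0 := Ioc_union_Ioi_eq_Ioi hu.le
  constructor
  · rw [← hsplit]; exact h1.union h2
  · rw [← hsplit, setIntegral_union (Ioc_disjoint_Ioi le_rfl) measurableSet_Ioi h1 h2]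
    congr 1
    · apply setIntegral_congr_fun measurableSet_Ioc
      intro v hv
      simp only
      rw [abs_of_nonpos (by simp only [mem_Ioc] at hv; linarith), neg_sub]
    · rw [setIntegral_congr_fun measurableSet_Ioi heq2, aux_shift_gamma_val hp hc u]

lemma aux_inner (p c c' : ℝ) (hp : 0 < p) (hc : 0 < c) (hc' : 0 < c') {u : ℝ} (hu : 0 < u) :
    (∫ v in Ioi (0:ℝ), Real.exp (-c * u - c' * v) * (u ^ p + v ^ p - |v - u| ^ p))
    = Real.exp (-(c * u)) * (u ^ p / c')
      + Real.exp (-(c * u)) * (Real.Gamma (p + 1) / c' ^ (p + 1))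
      - Real.exp (-(c * u)) * (∫ v in Ioc (0:ℝ) u, Real.exp (-(c' * v)) * (u - v) ^ p)
      - Real.exp (-((c + c') * u)) * (Real.Gamma (p + 1) / c' ^ (p + 1)) := by
  have habs := aux_abs_int hp hc' hu
  have hrw : ∀ v : ℝ, Real.exp (-c * u - c' * v) * (u ^ p + v ^ p - |v - u| ^ p)
      = Real.exp (-(c * u)) * ((Real.exp (-(c' * v)) * u ^ p + v ^ p * Real.exp (-(c' * v)))
          - Real.exp (-(c' * v)) * |v - u| ^ p) := by
    intro v
    rw [show -c * u - c' * v = -(c * u) + -(c' * v) by ring, Real.exp_add]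
    ring
  simp_rw [hrw]
  rw [MeasureTheory.integral_const_mul]
  have i1 : IntegrableOn (fun v : ℝ => Real.exp (-(c' * v)) * u ^ p) (Ioi 0) := by
    apply Integrable.mul_const
    simpa [neg_mul, IntegrableOn] using exp_neg_integrableOn_Ioi (0:ℝ) hc'
  have i2 : IntegrableOn (fun v : ℝ => v ^ p * Real.exp (-(c' * v))) (Ioi 0) :=
    aux_gamma_integrable hp hc'
  have i12 : IntegrableOn (fun v : ℝ => Real.exp (-(c' * v)) * u ^ p
      + v ^ p * Real.exp (-(c' * v))) (Ioi 0) := i1.add i2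
  rw [integral_sub i12 habs.1, integral_add i1 i2, habs.2,
    MeasureTheory.integral_mul_const, aux_exp_int hc' 0, aux_gamma_int hp hc']
  rw [show -((c + c') * u) = -(c * u) + -(c' * u) by ring, Real.exp_add]
  simp
  ring


section Fubini
variable {p c c' : ℝ}

/-- The uncurried kernel. -/
noncomputable def K (p c c' : ℝ) : ℝ × ℝ → ℝ := fun q =>
  if q.2 ≤ q.1 then Real.exp (-(c * q.1)) * (Real.exp (-(c' * q.2)) * (q.1 - q.2) ^ p) else 0

lemma K_meas : Measurable (K p c c') := by
  apply Measurable.ite (measurableSet_le measurable_snd measurable_fst)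
  · exact ((Real.measurable_exp.comp ((measurable_fst.const_mul c).neg)).mul
      ((Real.measurable_exp.comp ((measurable_snd.const_mul c').neg)).mul
        ((measurable_fst.sub measurable_snd).pow_const p)))
  · exact measurable_const

lemma K_nonneg (q : ℝ × ℝ) : 0 ≤ K p c c' q := by
  unfold K
  split
  · next h =>
    have : (0:ℝ) ≤ (q.1 - q.2) ^ p := Real.rpow_nonneg (by linarith) p
    positivity
  · exact le_refl _

lemma K_cont_g (hp : 0 < p) (c c' u : ℝ) :
    Continuous (fun v : ℝ => Real.exp (-(c * u)) * (Real.exp (-(c' * v)) * (u - v) ^ p)) := by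
  apply Continuous.mul continuous_const
  exact (Real.continuous_exp.comp (by continuity)).mul
    ((aux_cont_rpow hp).comp (by continuity))

lemma K_eq_indicator {u : ℝ} (hu : (0:ℝ) < u) :
    EqOn (fun v => K p c c' (u, v))
      ((Ioc (0:ℝ) u).indicator
        (fun v => Real.exp (-(c * u)) * (Real.exp (-(c' * v)) * (u - v) ^ p))) (Ioi 0) := by
  intro v hv
  simp only [mem_Ioi] at hv
  by_cases h : v ≤ u
  · simp [K, h, indicator_of_mem, mem_Ioc, hv]
  · simp [K, h, indicator_of_notMem, mem_Ioc]

lemma K_inner_eq {u : ℝ} (hp : 0 < p) (hu : (0:ℝ) < u) :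
    ∫ v in Ioi (0:ℝ), K p c c' (u, v)
      = Real.exp (-(c * u)) * ∫ v in Ioc (0:ℝ) u, Real.exp (-(c' * v)) * (u - v) ^ p := by
  rw [setIntegral_congr_fun measurableSet_Ioi (K_eq_indicator hu),
    setIntegral_indicator measurableSet_Ioc,
    inter_eq_right.2 Ioc_subset_Ioi_self, MeasureTheory.integral_const_mul]

lemma K_inner_intble {u : ℝ} (hp : 0 < p) (hu : (0:ℝ) < u) :
    Integrable (fun v => K p c c' (u, v)) (volume.restrict (Ioi 0)) := by
  apply Integrable.congr _ ((ae_restrict_iff' measurableSet_Ioi).2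
    (Filter.Eventually.of_forall (fun v hv => ((K_eq_indicator hu) hv).symm)))
  exact (((K_cont_g hp c c' u).integrableOn_Ioc).integrable_indicator
    measurableSet_Ioc).restrict

lemma K_main (hp : 0 < p) (hc : 0 < c) (hc' : 0 < c') :
    IntegrableOn (fun u => Real.exp (-(c * u)) *
        ∫ v in Ioc (0:ℝ) u, Real.exp (-(c' * v)) * (u - v) ^ p) (Ioi 0)
    ∧ (∫ u in Ioi (0:ℝ), Real.exp (-(c * u)) *
        ∫ v in Ioc (0:ℝ) u, Real.exp (-(c' * v)) * (u - v) ^ p)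
      = Real.Gamma (p + 1) / c ^ (p + 1) * (1 / (c + c')) := by
  set μ := volume.restrict (Ioi (0:ℝ)) with hμ
  have haesm : AEStronglyMeasurable (K p c c') (μ.prod μ) :=
    (K_meas).aestronglyMeasurable
  have hbound : ∀ᵐ u ∂μ, ‖∫ v, K p c c' (u, v) ∂μ‖ ≤ u ^ (p + 1) * Real.exp (-(c * u)) := by
    rw [hμ]
    filter_upwards [ae_restrict_mem measurableSet_Ioi] with u hu
    simp only [mem_Ioi] at hu
    rw [show (∫ v, K p c c' (u, v) ∂(volume.restrict (Ioi 0)))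
        = ∫ v in Ioi (0:ℝ), K p c c' (u, v) from rfl, K_inner_eq hp hu]
    rw [norm_mul, Real.norm_of_nonneg (Real.exp_pos _).le]
    have hJ : ‖∫ v in Ioc (0:ℝ) u, Real.exp (-(c' * v)) * (u - v) ^ p‖
        ≤ u ^ p * (volume (Ioc (0:ℝ) u)).toReal := by
      apply norm_setIntegral_le_of_norm_le_const
      · rw [Real.volume_Ioc]; exact ENNReal.ofReal_lt_top
      · intro v hv
        simp only [mem_Ioc] at hv
        rw [Real.norm_of_nonneg
          (mul_nonneg (Real.exp_pos _).le (Real.rpow_nonneg (by linarith) _))]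
        calc Real.exp (-(c' * v)) * (u - v) ^ p
            ≤ 1 * (u - v) ^ p := by
              apply mul_le_mul_of_nonneg_right _ (Real.rpow_nonneg (by linarith) p)
              rw [Real.exp_le_one_iff]
              nlinarith
          _ = (u - v) ^ p := one_mul _
          _ ≤ u ^ p := Real.rpow_le_rpow (by linarith) (by linarith) hp.le
    have hvol : (volume (Ioc (0:ℝ) u)).toReal = u := by
      rw [Real.volume_Ioc, ENNReal.toReal_ofReal (by linarith), sub_zero]
    calc Real.exp (-(c * u)) * ‖∫ v in Ioc (0:ℝ) u, Real.exp (-(c' * v)) * (u - v) ^ p‖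
        ≤ Real.exp (-(c * u)) * (u ^ p * u) := by
          exact mul_le_mul_of_nonneg_left (hJ.trans_eq (by rw [hvol]))
            (Real.exp_pos _).le
      _ = u ^ (p + 1) * Real.exp (-(c * u)) := by
          rw [Real.rpow_add_one (ne_of_gt hu)]; ring
  have hK : Integrable (K p c c') (μ.prod μ) := by
    refine (integrable_prod_iff haesm).2 ⟨?_, ?_⟩
    · rw [hμ]
      filter_upwards [ae_restrict_mem measurableSet_Ioi] with u hu
      exact K_inner_intble hp hu
    · have hnorm : ∀ u : ℝ, (∫ v, ‖K p c c' (u, v)‖ ∂μ) = ∫ v, K p c c' (u, v) ∂μ := by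
        intro u
        congr 1 with v
        exact Real.norm_of_nonneg (K_nonneg _)
      simp_rw [hnorm]
      apply Integrable.mono' (g := fun u => u ^ (p + 1) * Real.exp (-(c * u)))
        (aux_gamma_integrable (by linarith) hc) (haesm.integral_prod_right') hbound
  have hswap : (∫ u, ∫ v, K p c c' (u, v) ∂μ ∂μ) = ∫ v, ∫ u, K p c c' (u, v) ∂μ ∂μ :=
    integral_integral_swap hK
  have hLHS : (∫ u, ∫ v, K p c c' (u, v) ∂μ ∂μ)
      = ∫ u in Ioi (0:ℝ), Real.exp (-(c * u)) *
          ∫ v in Ioc (0:ℝ) u, Real.exp (-(c' * v)) * (u - v) ^ p := by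
    rw [hμ]
    apply integral_congr_ae
    filter_upwards [ae_restrict_mem measurableSet_Ioi] with u hu
    exact K_inner_eq hp hu
  have hRHS : (∫ v, ∫ u, K p c c' (u, v) ∂μ ∂μ)
      = Real.Gamma (p + 1) / c ^ (p + 1) * (1 / (c + c')) := by
    have hin : ∀ v : ℝ, 0 < v → (∫ u, K p c c' (u, v) ∂μ)
        = Real.exp (-((c + c') * v)) * (Real.Gamma (p + 1) / c ^ (p + 1)) := by
      intro v hv
      have heq : ∀ u : ℝ, K p c c' (u, v)
          = (Ici v).indicator
              (fun u => Real.exp (-(c' * v)) * (Real.exp (-(c * u)) * (u - v) ^ p)) u := by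
        intro u
        by_cases h : v ≤ u
        · simp [K, h, indicator_of_mem, mem_Ici]; ring
        · simp [K, h, indicator_of_notMem, mem_Ici]
      rw [hμ]
      simp_rw [heq]
      rw [show (∫ u, (Ici v).indicator _ u ∂(volume.restrict (Ioi 0)))
          = ∫ u in Ioi (0:ℝ), (Ici v).indicator
              (fun u => Real.exp (-(c' * v)) * (Real.exp (-(c * u)) * (u - v) ^ p)) u from rfl,
        setIntegral_indicator measurableSet_Ici,
        show Ioi (0:ℝ) ∩ Ici v = Ici v from
          inter_eq_right.2 (fun x hx => lt_of_lt_of_le hv hx),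
        integral_Ici_eq_integral_Ioi, MeasureTheory.integral_const_mul,
        aux_shift_gamma_val hp hc v,
        show -((c + c') * v) = -(c' * v) + -(c * v) by ring, Real.exp_add]
      ring
    rw [hμ]
    rw [setIntegral_congr_fun measurableSet_Ioi (fun v hv => hin v hv)]
    rw [MeasureTheory.integral_mul_const, aux_exp_int (by linarith : (0:ℝ) < c + c') 0]
    simp [mul_comm]
  refine ⟨?_, by rw [← hLHS, hswap, hRHS]⟩
  · apply (hK.integral_prod_left).congr
    rw [hμ]
    filter_upwards [ae_restrict_mem measurableSet_Ioi] with u hu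
    exact K_inner_eq hp hu

end Fubini


/-- explicit value of the double Laplace-type integral giving the
stationary covariance of two fractional Ornstein–Uhlenbeck processes. -/
theorem statement_18 (H m m' : ℝ) (hH0 : 0 < H) (hH1 : H < 1) (hH : H ≠ 1 / 2)
    (hm : 0 < m) (hm' : 0 < m') :
    (∫ u in Set.Ioi (0 : ℝ), ∫ v in Set.Ioi (0 : ℝ),
        Real.exp (-m * u - m' * v) * (u ^ (2 * H) + v ^ (2 * H) - |v - u| ^ (2 * H))) =
      Real.Gamma (2 * H + 1) / (m * m' * (m + m')) *
        (m ^ (1 - 2 * H) + m' ^ (1 - 2 * H)) := by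
  set p := 2 * H with hpdef
  have hp : 0 < p := by positivity
  have hKm := K_main (c := m) (c' := m') hp hm hm'
  rw [setIntegral_congr_fun measurableSet_Ioi
    (fun u hu => aux_inner p m m' hp hm hm' hu)]
  have I1 : IntegrableOn (fun u : ℝ => Real.exp (-(m * u)) * (u ^ p / m')) (Ioi 0) := by
    have : (fun u : ℝ => Real.exp (-(m * u)) * (u ^ p / m'))
        = fun u : ℝ => (u ^ p * Real.exp (-(m * u))) * (1 / m') := by funext u; ring
    rw [this]
    exact (aux_gamma_integrable hp hm).mul_const _
  have I2 : IntegrableOn (fun u : ℝ =>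
      Real.exp (-(m * u)) * (Real.Gamma (p + 1) / m' ^ (p + 1))) (Ioi 0) := by
    apply Integrable.mul_const
    simpa only [neg_mul, IntegrableOn] using exp_neg_integrableOn_Ioi (0:ℝ) hm
  have I4 : IntegrableOn (fun u : ℝ =>
      Real.exp (-((m + m') * u)) * (Real.Gamma (p + 1) / m' ^ (p + 1))) (Ioi 0) := by
    apply Integrable.mul_const
    simpa only [neg_mul, IntegrableOn] using
      exp_neg_integrableOn_Ioi (0:ℝ) (show (0:ℝ) < m + m' by linarith)
  have IA : IntegrableOn (fun u : ℝ => Real.exp (-(m * u)) * (u ^ p / m')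
      + Real.exp (-(m * u)) * (Real.Gamma (p + 1) / m' ^ (p + 1))) (Ioi 0) := I1.add I2
  have IB : IntegrableOn (fun u : ℝ => (Real.exp (-(m * u)) * (u ^ p / m')
      + Real.exp (-(m * u)) * (Real.Gamma (p + 1) / m' ^ (p + 1)))
      - Real.exp (-(m * u)) * ∫ v in Ioc (0:ℝ) u, Real.exp (-(m' * v)) * (u - v) ^ p)
      (Ioi 0) := IA.sub hKm.1
  rw [integral_sub IB I4, integral_sub IA hKm.1, integral_add I1 I2, hKm.2]
  have E1 : (∫ u in Ioi (0:ℝ), Real.exp (-(m * u)) * (u ^ p / m'))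
      = Real.Gamma (p + 1) / m ^ (p + 1) * (1 / m') := by
    have : (fun u : ℝ => Real.exp (-(m * u)) * (u ^ p / m'))
        = fun u : ℝ => (u ^ p * Real.exp (-(m * u))) * (1 / m') := by funext u; ring
    rw [this, MeasureTheory.integral_mul_const, aux_gamma_int hp hm]
  have E2 : (∫ u in Ioi (0:ℝ), Real.exp (-(m * u)) * (Real.Gamma (p + 1) / m' ^ (p + 1)))
      = (1 / m) * (Real.Gamma (p + 1) / m' ^ (p + 1)) := by
    rw [MeasureTheory.integral_mul_const, aux_exp_int hm 0]
    simp
  have E4 : (∫ u in Ioi (0:ℝ),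
        Real.exp (-((m + m') * u)) * (Real.Gamma (p + 1) / m' ^ (p + 1)))
      = (1 / (m + m')) * (Real.Gamma (p + 1) / m' ^ (p + 1)) := by
    rw [MeasureTheory.integral_mul_const,
      aux_exp_int (show (0:ℝ) < m + m' by linarith) 0]
    simp
  rw [E1, E2, E4]
  have hmp : m ^ (1 - p) = m ^ 2 / m ^ (p + 1) := by
    rw [eq_div_iff (by positivity : m ^ (p + 1) ≠ (0:ℝ)), ← Real.rpow_add hm,
      show (1 - p + (p + 1)) = ((2:ℕ):ℝ) by push_cast; ring, Real.rpow_natCast]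
  have hmp' : m' ^ (1 - p) = m' ^ 2 / m' ^ (p + 1) := by
    rw [eq_div_iff (by positivity : m' ^ (p + 1) ≠ (0:ℝ)), ← Real.rpow_add hm',
      show (1 - p + (p + 1)) = ((2:ℕ):ℝ) by push_cast; ring, Real.rpow_natCast]
  rw [hmp, hmp']
  have h1 : m ^ (p + 1) ≠ 0 := by positivity
  have h2 : m' ^ (p + 1) ≠ 0 := by positivity
  field_simp
  ring
end

section
/- Let H ∈ (1/2, 1) and m, m' > 0. Then lim_{t→∞} t^{2−2H} ∫_{−∞}^0 ( ∫_{−∞}^t e^{m u} e^{−m'(t−v)} |v − u|^{2H−2} dv ) du = 1/(m m'). (Equivalently, the cross-covariance E[Z_0^m Z_t^{m'}] = H(2H−1) ∫_{−∞}^0 ∫_{−∞}^t e^{mu} e^{−m'(t−v)} |v−u|^{2H−2} dv du of the stationary fractional Ornstein–Uhlenbeck processes with drift parameters m and m' satisfies E[Z_0^m Z_t^{m'}] ∼ (H(2H−1)/(m m')) t^{2H−2} as t → ∞.) -/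
open MeasureTheory Real Filter

open Set


lemma abs_rpow_intervalIntegrable (a c x y : ℝ) (ha1 : -1 < a) :
    IntervalIntegrable (fun s => |c - s| ^ a) volume x y := by
  have habs : ∀ x y : ℝ, IntervalIntegrable (fun s : ℝ => |s| ^ a) volume x y := by
    have h0 : ∀ T : ℝ, 0 ≤ T → IntervalIntegrable (fun s : ℝ => |s| ^ a) volume 0 T := by
      intro T hT
      rw [intervalIntegrable_iff_integrableOn_Ioc_of_le hT]
      have := intervalIntegral.intervalIntegrable_rpow' (a := 0) (b := T) ha1
      rw [intervalIntegrable_iff_integrableOn_Ioc_of_le hT] at this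
      apply this.congr_fun ?_ measurableSet_Ioc
      intro x hx
      simp only []
      rw [abs_of_pos hx.1]
    have hneg : ∀ T : ℝ, 0 ≤ T → IntervalIntegrable (fun s : ℝ => |s| ^ a) volume (-T) 0 := by
      intro T hT
      rw [IntervalIntegrable.iff_comp_neg]
      simpa using (h0 T hT).symm
    have key : ∀ T : ℝ, 0 ≤ T → IntervalIntegrable (fun s : ℝ => |s| ^ a) volume (-T) T :=
      fun T hT => (hneg T hT).trans (h0 T hT)
    intro x y
    refine (key (max |x| |y|) (le_max_of_le_left (abs_nonneg x))).mono_set ?_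
    rw [uIcc_of_le (neg_le_self (le_max_of_le_left (abs_nonneg x))), uIcc]
    apply Icc_subset_Icc
    · simp only [le_inf_iff, neg_le]
      constructor
      · exact le_max_of_le_left (neg_le_abs x)
      · exact le_max_of_le_right (neg_le_abs y)
    · simp only [sup_le_iff]
      exact ⟨le_max_of_le_left (le_abs_self x), le_max_of_le_right (le_abs_self y)⟩
  have := (habs (c - x) (c - y)).comp_sub_left c
  simpa using this

lemma window_integral (a c T : ℝ) (ha1 : -1 < a) (hT : 0 ≤ T) :
    ∫ s in Icc (c - T) (c + T), |c - s| ^ a = 2 * T ^ (a + 1) / (a + 1) := by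
  have h1 : ∫ s in Icc (c - T) (c + T), |c - s| ^ a
      = ∫ s in (c - T)..(c + T), |c - s| ^ a := by
    rw [intervalIntegral.integral_of_le (by linarith), integral_Icc_eq_integral_Ioc]
  have h2 : ∫ s in (c - T)..(c + T), |c - s| ^ a = ∫ x in (-T)..T, |x| ^ a := by
    have := intervalIntegral.integral_comp_sub_left (a := c - T) (b := c + T)
      (fun x : ℝ => |x| ^ a) c
    simpa using this
  have h0T : ∫ x in (0:ℝ)..T, |x| ^ a = T ^ (a + 1) / (a + 1) := by
    rw [intervalIntegral.integral_congr (g := fun x : ℝ => x ^ a) ?_,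
      integral_rpow (Or.inl ha1)]
    · rw [Real.zero_rpow (by linarith), sub_zero]
    · intro x hx
      rw [uIcc_of_le hT] at hx
      simp only []
      rw [abs_of_nonneg hx.1]
  have hneg : ∫ x in (-T)..(0:ℝ), |x| ^ a = T ^ (a + 1) / (a + 1) := by
    have := intervalIntegral.integral_comp_neg (a := (0:ℝ)) (b := T) (fun x : ℝ => |x| ^ a)
    simp only [abs_neg, neg_zero] at this
    rw [← this, h0T]
  have i1 : IntervalIntegrable (fun s : ℝ => |s| ^ a) volume (-T) 0 := by
    simpa using abs_rpow_intervalIntegrable a 0 (-T) 0 ha1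
  have i2 : IntervalIntegrable (fun s : ℝ => |s| ^ a) volume 0 T := by
    simpa using abs_rpow_intervalIntegrable a 0 0 T ha1
  have hadd := intervalIntegral.integral_add_adjacent_intervals i1 i2
  rw [h1, h2, ← hadd, h0T, hneg]
  ring

lemma window_integrableOn (a c x y : ℝ) (ha1 : -1 < a) :
    IntegrableOn (fun s => |c - s| ^ a) (Icc x y) := by
  rcases le_or_gt x y with h | h
  · rw [integrableOn_Icc_iff_integrableOn_Ioc]
    exact (intervalIntegrable_iff_integrableOn_Ioc_of_le h).1
      (abs_rpow_intervalIntegrable a c x y ha1)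
  · rw [Icc_eq_empty (not_le.2 h)]
    exact integrableOn_empty

lemma kernel_measurable (a c : ℝ) : Measurable (fun s : ℝ => |c - s| ^ a) := by fun_prop

lemma int_exp_Ioi (μ : ℝ) (hμ : 0 < μ) : ∫ s in Ioi (0:ℝ), Real.exp (-μ * s) = 1 / μ := by
  have := integral_comp_mul_left_Ioi (fun x : ℝ => Real.exp (-x)) 0 hμ
  simp only [mul_zero, integral_exp_neg_Ioi_zero, smul_eq_mul, mul_one] at this
  rw [one_div, ← this]
  simp [neg_mul]

lemma expKernel_integrableOn (a μ c : ℝ) (ha1 : -1 < a) (ha0 : a < 0) (hμ : 0 < μ) :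
    IntegrableOn (fun s => Real.exp (-μ * s) * |c - s| ^ a) (Ioi 0) := by
  set g : ℝ → ℝ := fun s =>
    Real.exp (-μ * s) + Set.indicator (Icc (c - 1) (c + 1)) (fun s => |c - s| ^ a) s with hg
  have hgint : IntegrableOn g (Ioi 0) := by
    have h1 : Integrable (Set.indicator (Icc (c - 1) (c + 1)) (fun s => |c - s| ^ a)) volume :=
      (window_integrableOn a c (c-1) (c+1) ha1).integrable_indicator measurableSet_Icc
    exact (exp_neg_integrableOn_Ioi 0 hμ).add h1.integrableOn
  apply Integrable.mono hgint
  · exact ((measurable_exp.comp (measurable_const.mul measurable_id)).mul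
      (kernel_measurable a c)).aestronglyMeasurable
  · filter_upwards [ae_restrict_mem measurableSet_Ioi] with s hs
    have hker : (0:ℝ) ≤ |c - s| ^ a := Real.rpow_nonneg (abs_nonneg _) a
    have hf0 : (0:ℝ) ≤ Real.exp (-μ * s) * |c - s| ^ a := by positivity
    have hg0 : (0:ℝ) ≤ g s := by
      apply add_nonneg (Real.exp_nonneg _)
      exact Set.indicator_nonneg (fun x _ => Real.rpow_nonneg (abs_nonneg _) a) s
    rw [Real.norm_of_nonneg hf0, Real.norm_of_nonneg hg0]
    have hind0 : (0:ℝ) ≤ Set.indicator (Icc (c - 1) (c + 1)) (fun x => |c - x| ^ a) s :=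
      Set.indicator_nonneg (fun x _ => Real.rpow_nonneg (abs_nonneg _) a) s
    rcases le_or_gt 1 (|c - s|) with h | h
    · have h1 : |c - s| ^ a ≤ 1 := Real.rpow_le_one_of_one_le_of_nonpos h ha0.le
      have h2 : Real.exp (-μ * s) * |c - s| ^ a ≤ Real.exp (-μ * s) := by
        nlinarith [Real.exp_pos (-μ * s)]
      rw [hg]
      simp only []
      linarith
    · have hmem : s ∈ Icc (c - 1) (c + 1) := by
        rcases abs_le.1 h.le with ⟨h1, h2⟩
        constructor <;> linarith
      have hexp : Real.exp (-μ * s) ≤ 1 := by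
        apply Real.exp_le_one_iff.2
        have : (0:ℝ) < s := hs
        nlinarith
      have : Real.exp (-μ * s) * |c - s| ^ a ≤ |c - s| ^ a := by
        nlinarith
      rw [hg]
      simp only []
      rw [Set.indicator_of_mem hmem]
      nlinarith [Real.exp_nonneg (-μ * s)]

lemma rpow_half_aux (t x : ℝ) (ht : 0 < t) : t ^ (-x) * (t / 2) ^ x = 2 ^ (-x) := by
  rw [div_eq_mul_inv t 2, Real.mul_rpow ht.le (by norm_num), Real.rpow_neg ht.le,
    Real.rpow_neg (by norm_num : (0:ℝ) ≤ 2), Real.inv_rpow (by norm_num : (0:ℝ) ≤ 2)]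
  field_simp

lemma rpow_half_aux' (t x : ℝ) (ht : 0 < t) :
    t ^ (-x) * (t / 2) ^ (x + 1) = 2 ^ (-x) * (t / 2) := by
  rw [Real.rpow_add (half_pos ht), Real.rpow_one, ← mul_assoc, rpow_half_aux t x ht]

lemma key_bound (a μ t c : ℝ) (ha1 : -1 < a) (ha0 : a < 0) (hμ : 0 < μ)
    (ht : 0 < t) (hc : t ≤ c) :
    ∫ s in Ioi (0:ℝ), Real.exp (-μ * s) * (t ^ (-a) * |c - s| ^ a)
      ≤ 2 ^ (-a) / μ + Real.exp (-μ * t / 2) * (2 ^ (-a) * (t / (a + 1))) := by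
  set W : Set ℝ := Icc (c - t/2) (c + t/2) with hW
  set g : ℝ → ℝ := fun s => 2 ^ (-a) * Real.exp (-μ * s)
    + Real.exp (-μ * t / 2) * (t ^ (-a) * Set.indicator W (fun x => |c - x| ^ a) s) with hg
  have hWind : Integrable (Set.indicator W (fun x => |c - x| ^ a)) volume :=
    (window_integrableOn a c (c - t/2) (c + t/2) ha1).integrable_indicator measurableSet_Icc
  have hker_nonneg : ∀ s : ℝ, (0:ℝ) ≤ |c - s| ^ a := fun s => Real.rpow_nonneg (abs_nonneg _) a
  have hind_nonneg : ∀ s : ℝ, (0:ℝ) ≤ Set.indicator W (fun x => |c - x| ^ a) s :=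
    fun s => Set.indicator_nonneg (fun x _ => hker_nonneg x) s
  have hta : (0:ℝ) < t ^ (-a) := Real.rpow_pos_of_pos ht _
  have hf : IntegrableOn (fun s => Real.exp (-μ * s) * (t ^ (-a) * |c - s| ^ a)) (Ioi 0) := by
    have := (expKernel_integrableOn a μ c ha1 ha0 hμ).const_mul (t ^ (-a))
    exact this.congr (ae_of_all _ fun s => by ring)
  have hg1 : IntegrableOn (fun s => 2 ^ (-a) * Real.exp (-μ * s)) (Ioi 0) :=
    (exp_neg_integrableOn_Ioi 0 hμ).const_mul _
  have hg2 : IntegrableOn (fun s =>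
      Real.exp (-μ * t / 2) * (t ^ (-a) * Set.indicator W (fun x => |c - x| ^ a) s)) (Ioi 0) :=
    (hWind.integrableOn.const_mul (t ^ (-a))).const_mul (Real.exp (-μ * t / 2))
  have hgint : IntegrableOn g (Ioi 0) := hg1.add hg2
  have hmono : ∀ s ∈ Ioi (0:ℝ),
      Real.exp (-μ * s) * (t ^ (-a) * |c - s| ^ a) ≤ g s := by
    intro s hs
    rcases le_or_gt (|c - s|) (t/2) with hk | hk
    · have hmem : s ∈ W := by
        rcases abs_le.1 hk with ⟨h1, h2⟩
        constructor <;> linarith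
      have hexp : Real.exp (-μ * s) ≤ Real.exp (-μ * t / 2) := by
        apply Real.exp_le_exp.2
        have h1 : c - t/2 ≤ s := hmem.1
        nlinarith
      have : Real.exp (-μ * s) * (t ^ (-a) * |c - s| ^ a)
          ≤ Real.exp (-μ * t / 2) * (t ^ (-a) * |c - s| ^ a) := by
        apply mul_le_mul_of_nonneg_right hexp (by positivity)
      rw [hg]
      simp only []
      rw [Set.indicator_of_mem hmem]
      nlinarith [mul_pos (Real.rpow_pos_of_pos (by norm_num : (0:ℝ)<2) (-a)) (Real.exp_pos (-μ * s))]
    · have hk1 : |c - s| ^ a ≤ (t/2) ^ a :=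
        Real.rpow_le_rpow_of_nonpos (half_pos ht) hk.le ha0.le
      have h2 : t ^ (-a) * |c - s| ^ a ≤ 2 ^ (-a) := by
        calc t ^ (-a) * |c - s| ^ a ≤ t ^ (-a) * (t/2) ^ a :=
              mul_le_mul_of_nonneg_left hk1 hta.le
        _ = 2 ^ (-a) := rpow_half_aux t a ht
      have : Real.exp (-μ * s) * (t ^ (-a) * |c - s| ^ a) ≤ Real.exp (-μ * s) * 2 ^ (-a) :=
        mul_le_mul_of_nonneg_left h2 (Real.exp_nonneg _)
      rw [hg]
      simp only []
      nlinarith [mul_nonneg (mul_nonneg (Real.exp_nonneg (-μ * t / 2)) hta.le) (hind_nonneg s)]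
  calc ∫ s in Ioi (0:ℝ), Real.exp (-μ * s) * (t ^ (-a) * |c - s| ^ a)
      ≤ ∫ s in Ioi (0:ℝ), g s := setIntegral_mono_on hf hgint measurableSet_Ioi hmono
    _ = (∫ s in Ioi (0:ℝ), 2 ^ (-a) * Real.exp (-μ * s))
        + ∫ s in Ioi (0:ℝ), Real.exp (-μ * t / 2)
            * (t ^ (-a) * Set.indicator W (fun x => |c - x| ^ a) s) :=
      integral_add hg1 hg2
    _ ≤ 2 ^ (-a) / μ + Real.exp (-μ * t / 2) * (2 ^ (-a) * (t / (a + 1))) := by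
      gcongr
      · rw [integral_const_mul, int_exp_Ioi μ hμ]
        apply le_of_eq
        ring
      · rw [integral_const_mul, integral_const_mul]
        apply mul_le_mul_of_nonneg_left ?_ (Real.exp_nonneg _)
        have hle : ∫ s in Ioi (0:ℝ), Set.indicator W (fun x => |c - x| ^ a) s
            ≤ ∫ s, Set.indicator W (fun x => |c - x| ^ a) s :=
          setIntegral_le_integral hWind (ae_of_all _ hind_nonneg)
        have hval : ∫ s, Set.indicator W (fun x => |c - x| ^ a) s
            = 2 * (t/2) ^ (a + 1) / (a + 1) := by
          rw [integral_indicator measurableSet_Icc, window_integral a c (t/2) ha1 (half_pos ht).le]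
        calc t ^ (-a) * ∫ s in Ioi (0:ℝ), Set.indicator W (fun x => |c - x| ^ a) s
            ≤ t ^ (-a) * (2 * (t/2) ^ (a + 1) / (a + 1)) := by
              apply mul_le_mul_of_nonneg_left _ hta.le
              rw [← hval]; exact hle
          _ = 2 ^ (-a) * (t / (a + 1)) := by
              have h := rpow_half_aux' t a ht
              have ha1' : a + 1 ≠ 0 := by linarith
              field_simp
              linear_combination 2 * h

lemma integral_Iic_comp_sub (t : ℝ) (f : ℝ → ℝ) :
    (∫ v in Iic t, f v) = ∫ s in Ioi (0:ℝ), f (t - s) := by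
  have h1 : (∫ s in Ioi (0:ℝ), f (t - s)) = ∫ x in Iic (0:ℝ), f (t + x) := by
    have := integral_comp_neg_Ioi (0:ℝ) (fun x => f (t + x))
    simp only [neg_zero, ← sub_eq_add_neg] at this
    exact this
  have A : MeasurableEmbedding (fun x : ℝ => x + t) :=
    (Homeomorph.addRight t).isClosedEmbedding.measurableEmbedding
  have h2 := A.setIntegral_map (μ := volume) f (Iic t)
  rw [map_add_right_eq_self volume t] at h2
  have h3 : (fun x : ℝ => x + t) ⁻¹' (Iic t) = Iic 0 := by
    ext x; simp [sub_nonneg]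
  rw [h3] at h2
  rw [h1, h2]
  congr 1 with x
  rw [add_comm]

lemma expKernel_integrableOn' (a μ c b : ℝ) (ha1 : -1 < a) (ha0 : a < 0) (hμ : 0 < μ) :
    IntegrableOn (fun s => Real.exp (-μ * s) * (b * |c - s| ^ a)) (Ioi 0) := by
  have := (expKernel_integrableOn a μ c ha1 ha0 hμ).const_mul b
  exact this.congr (ae_of_all _ fun s => by ring)

lemma exp_decay_aux (μ t : ℝ) (hμ : 0 < μ) (ht : 0 ≤ t) :
    Real.exp (-μ * t / 2) * t ≤ 2 / μ := by
  have h1 : μ * t / 2 ≤ Real.exp (μ * t / 2) := by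
    linarith [Real.add_one_le_exp (μ * t / 2)]
  have h3 : Real.exp (-μ * t / 2) * Real.exp (μ * t / 2) = 1 := by
    rw [← Real.exp_add, show -μ * t / 2 + μ * t / 2 = 0 by ring, Real.exp_zero]
  have hE1 : 0 < Real.exp (-μ * t / 2) := Real.exp_pos _
  rw [le_div_iff₀ hμ]
  nlinarith [mul_le_mul_of_nonneg_left h1 hE1.le]

lemma ratio_bound (a t x : ℝ) (ha0 : a < 0) (ht : 0 < t) (hx : t / 2 ≤ |x|) :
    t ^ (-a) * |x| ^ a ≤ 2 ^ (-a) := by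
  have h1 : |x| ^ a ≤ (t/2) ^ a :=
    Real.rpow_le_rpow_of_nonpos (half_pos ht) hx ha0.le
  calc t ^ (-a) * |x| ^ a ≤ t ^ (-a) * (t/2) ^ a :=
        mul_le_mul_of_nonneg_left h1 (Real.rpow_nonneg ht.le _)
    _ = 2 ^ (-a) := rpow_half_aux t a ht

lemma ratio_eq (a t x : ℝ) (ht : 0 < t) (hx : 0 < x) :
    t ^ (-a) * |x| ^ a = (x / t) ^ a := by
  rw [abs_of_pos hx, Real.div_rpow hx.le ht.le, Real.rpow_neg ht.le]
  ring

lemma inner_tendsto (a μ u : ℝ) (ha1 : -1 < a) (ha0 : a < 0) (hμ : 0 < μ) (hu : u ≤ 0) :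
    Tendsto (fun t : ℝ => ∫ s in Ioi (0:ℝ),
        Real.exp (-μ * s) * (t ^ (-a) * |t - u - s| ^ a))
      atTop (nhds (1 / μ)) := by
  set F : ℝ → ℝ → ℝ := fun t s => Real.exp (-μ * s) * (t ^ (-a) * |t - u - s| ^ a) with hF
  have hFint : ∀ t : ℝ, IntegrableOn (F t) (Ioi 0) := fun t =>
    expKernel_integrableOn' a μ (t - u) (t ^ (-a)) ha1 ha0 hμ
  have hFmeas : ∀ t : ℝ, Measurable (F t) := by
    intro t
    apply Measurable.mul (by fun_prop)
    exact (kernel_measurable a (t - u)).const_mul _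
  set M : ℝ → ℝ := fun t => ∫ s in Ioi (0:ℝ), Set.indicator (Iic (t/2)) (F t) s with hM
  set T : ℝ → ℝ := fun t => ∫ s in Ioi (0:ℝ), Set.indicator (Ioi (t/2)) (F t) s with hT
  have hsplit : ∀ t : ℝ, (∫ s in Ioi (0:ℝ), F t s) = M t + T t := by
    intro t
    have heq : ∀ s : ℝ, F t s
        = Set.indicator (Iic (t/2)) (F t) s + Set.indicator (Ioi (t/2)) (F t) s := by
      intro s
      by_cases hs : s ≤ t/2
      · rw [Set.indicator_of_mem (Set.mem_Iic.2 hs),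
          Set.indicator_of_notMem (by simp [Set.mem_Ioi]; exact hs)]
        ring
      · rw [Set.indicator_of_notMem (by simp [Set.mem_Iic]; exact not_le.1 hs),
          Set.indicator_of_mem (Set.mem_Ioi.2 (not_le.1 hs))]
        ring
    calc (∫ s in Ioi (0:ℝ), F t s)
        = ∫ s in Ioi (0:ℝ), (Set.indicator (Iic (t/2)) (F t) s
            + Set.indicator (Ioi (t/2)) (F t) s) := by
          apply integral_congr_ae (ae_of_all _ heq)
      _ = M t + T t :=
        integral_add ((hFint t).indicator measurableSet_Iic)
          ((hFint t).indicator measurableSet_Ioi)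
  have hMlim : Tendsto M atTop (nhds (1/μ)) := by
    rw [hM, ← int_exp_Ioi μ hμ]
    apply tendsto_integral_filter_of_dominated_convergence
      (fun s => 2 ^ (-a) * Real.exp (-μ * s))
    · filter_upwards with t
      exact ((hFmeas t).indicator measurableSet_Iic).aestronglyMeasurable
    · filter_upwards [eventually_ge_atTop (1:ℝ)] with t ht
      filter_upwards with s
      have h2a : (0:ℝ) < 2 ^ (-a) := Real.rpow_pos_of_pos (by norm_num) _
      by_cases hs : s ∈ Iic (t/2)
      · rw [Set.indicator_of_mem hs]
        have ht0 : (0:ℝ) < t := by linarith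
        have hx : t/2 ≤ |t - u - s| := by
          rw [abs_of_pos (by simp only [mem_Iic] at hs; linarith)]
          simp only [mem_Iic] at hs
          linarith
        have hb := ratio_bound a t (t - u - s) ha0 ht0 hx
        have hFnn : 0 ≤ F t s := by
          apply mul_nonneg (Real.exp_nonneg _)
          exact mul_nonneg (Real.rpow_nonneg ht0.le _) (Real.rpow_nonneg (abs_nonneg _) _)
        rw [Real.norm_of_nonneg hFnn, hF]
        simp only []
        calc Real.exp (-μ * s) * (t ^ (-a) * |t - u - s| ^ a)
            ≤ Real.exp (-μ * s) * 2 ^ (-a) :=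
              mul_le_mul_of_nonneg_left hb (Real.exp_nonneg _)
          _ = 2 ^ (-a) * Real.exp (-μ * s) := by ring
      · rw [Set.indicator_of_notMem hs]
        simp only [norm_zero]
        positivity
    · exact (exp_neg_integrableOn_Ioi 0 hμ).const_mul _
    · filter_upwards [ae_restrict_mem measurableSet_Ioi] with s hs
      have hs0 : (0:ℝ) < s := hs
      have hdiv : Tendsto (fun t : ℝ => (t - u - s) / t) atTop (nhds 1) := by
        have h1 : Tendsto (fun t : ℝ => 1 - (u + s) / t) atTop (nhds 1) := by
          have h2 : Tendsto (fun t : ℝ => (u + s) / t) atTop (nhds 0) :=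
            tendsto_const_nhds.div_atTop tendsto_id
          simpa using tendsto_const_nhds.sub h2
        apply h1.congr'
        filter_upwards [eventually_ge_atTop (1:ℝ)] with t ht
        have : t ≠ 0 := by linarith
        field_simp
        ring
      have hrpow : Tendsto (fun t : ℝ => ((t - u - s) / t) ^ a) atTop (nhds 1) := by
        have hc : ContinuousAt (fun x : ℝ => x ^ a) 1 :=
          Real.continuousAt_rpow_const 1 a (Or.inl one_ne_zero)
        have := hc.tendsto.comp hdiv
        simpa [Real.one_rpow, Function.comp_def] using this
      have hmain : Tendsto (fun t : ℝ => Real.exp (-μ * s) * ((t - u - s) / t) ^ a)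
          atTop (nhds (Real.exp (-μ * s))) := by
        simpa using hrpow.const_mul (Real.exp (-μ * s))
      apply hmain.congr'
      filter_upwards [eventually_ge_atTop (max (2*s) (u + s + 1))] with t ht
      have ht1 : 2*s ≤ t := le_trans (le_max_left _ _) ht
      have ht2 : u + s + 1 ≤ t := le_trans (le_max_right _ _) ht
      have ht0 : (0:ℝ) < t := by linarith
      have hx0 : (0:ℝ) < t - u - s := by linarith
      have hmem : s ∈ Iic (t/2) := by simp only [mem_Iic]; linarith
      rw [Set.indicator_of_mem hmem, hF]
      simp only []
      rw [ratio_eq a t (t - u - s) ht0 hx0]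
  have hTlim : Tendsto T atTop (nhds 0) := by
    set D : ℝ := 2 ^ (-a) / (μ/2) + 2 ^ (-a) * ((4/μ) / (a+1)) with hD
    apply squeeze_zero' (g := fun t => Real.exp (-μ/4 * t) * D)
    · filter_upwards [eventually_ge_atTop (1:ℝ)] with t ht
      apply integral_nonneg
      intro s
      apply Set.indicator_nonneg
      intro x _
      have ht0 : (0:ℝ) ≤ t := by linarith
      exact mul_nonneg (Real.exp_nonneg _)
        (mul_nonneg (Real.rpow_nonneg ht0 _) (Real.rpow_nonneg (abs_nonneg _) _))
    · filter_upwards [eventually_ge_atTop (1:ℝ)] with t ht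
      have ht0 : (0:ℝ) < t := by linarith
      have hμ2 : (0:ℝ) < μ/2 := by linarith
      have hGint : IntegrableOn
          (fun s => Real.exp (-μ*t/4) * (Real.exp (-(μ/2) * s) * (t ^ (-a) * |t - u - s| ^ a)))
          (Ioi 0) :=
        (expKernel_integrableOn' a (μ/2) (t - u) (t ^ (-a)) ha1 ha0 hμ2).const_mul _
      have hle1 : T t ≤ ∫ s in Ioi (0:ℝ),
          Real.exp (-μ*t/4) * (Real.exp (-(μ/2) * s) * (t ^ (-a) * |t - u - s| ^ a)) := by
        apply setIntegral_mono_on ((hFint t).indicator measurableSet_Ioi) hGint measurableSet_Ioi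
        intro s _
        have hker : (0:ℝ) ≤ t ^ (-a) * |t - u - s| ^ a :=
          mul_nonneg (Real.rpow_nonneg ht0.le _) (Real.rpow_nonneg (abs_nonneg _) _)
        by_cases hs : s ∈ Ioi (t/2)
        · rw [Set.indicator_of_mem hs, hF]
          simp only []
          have hs' : t/2 < s := hs
          have hexp : Real.exp (-μ * s) ≤ Real.exp (-μ*t/4) * Real.exp (-(μ/2) * s) := by
            rw [← Real.exp_add]
            apply Real.exp_le_exp.2
            nlinarith
          calc Real.exp (-μ * s) * (t ^ (-a) * |t - u - s| ^ a)
              ≤ (Real.exp (-μ*t/4) * Real.exp (-(μ/2) * s)) * (t ^ (-a) * |t - u - s| ^ a) :=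
                mul_le_mul_of_nonneg_right hexp hker
            _ = Real.exp (-μ*t/4) * (Real.exp (-(μ/2) * s) * (t ^ (-a) * |t - u - s| ^ a)) := by
                ring
        · rw [Set.indicator_of_notMem hs]
          positivity
      have hle2 : (∫ s in Ioi (0:ℝ),
          Real.exp (-μ*t/4) * (Real.exp (-(μ/2) * s) * (t ^ (-a) * |t - u - s| ^ a)))
          ≤ Real.exp (-μ*t/4) * D := by
        rw [integral_const_mul]
        apply mul_le_mul_of_nonneg_left ?_ (Real.exp_nonneg _)
        have hkb := key_bound a (μ/2) t (t - u) ha1 ha0 hμ2 ht0 (by linarith)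
        apply le_trans hkb
        rw [hD]
        have hexp2 : Real.exp (-(μ/2) * t / 2) * t ≤ 4/μ := by
          have := exp_decay_aux (μ/2) t hμ2 ht0.le
          have h24 : 2 / (μ/2) = 4/μ := by field_simp; ring
          linarith [h24 ▸ this]
        have h2a : (0:ℝ) < 2 ^ (-a) := Real.rpow_pos_of_pos (by norm_num) _
        have ha1' : (0:ℝ) < a + 1 := by linarith
        have : Real.exp (-(μ/2) * t / 2) * (2 ^ (-a) * (t / (a+1)))
            = (2 ^ (-a) / (a+1)) * (Real.exp (-(μ/2) * t / 2) * t) := by ring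
        rw [this]
        have : (2 ^ (-a) / (a+1)) * (Real.exp (-(μ/2) * t / 2) * t)
            ≤ (2 ^ (-a) / (a+1)) * (4/μ) := by
          apply mul_le_mul_of_nonneg_left hexp2 (by positivity)
        apply add_le_add_right
        calc (2 ^ (-a) / (a+1)) * (Real.exp (-(μ/2) * t / 2) * t)
            ≤ (2 ^ (-a) / (a+1)) * (4/μ) := this
          _ = 2 ^ (-a) * ((4/μ) / (a+1)) := by ring
      calc T t ≤ _ := hle1
        _ ≤ Real.exp (-μ*t/4) * D := hle2
        _ = Real.exp (-μ/4 * t) * D := by ring_nf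
    · have h1 : Tendsto (fun t : ℝ => -μ/4 * t) atTop atBot := by
        apply Tendsto.const_mul_atTop_of_neg (by linarith : -μ/4 < 0) tendsto_id
      have h2 : Tendsto (fun t : ℝ => Real.exp (-μ/4 * t)) atTop (nhds 0) :=
        Real.tendsto_exp_atBot.comp h1
      simpa using h2.mul_const D
  have := hMlim.add hTlim
  rw [add_zero] at this
  apply this.congr
  intro t
  exact (hsplit t).symm

lemma phi_bound (a μ t u : ℝ) (ha1 : -1 < a) (ha0 : a < 0) (hμ : 0 < μ)
    (ht : 1 ≤ t) (hu : u ≤ 0) :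
    (∫ s in Ioi (0:ℝ), Real.exp (-μ * s) * (t ^ (-a) * |t - u - s| ^ a))
      ≤ 2 ^ (-a) / μ + 2 ^ (-a) * ((2/μ) / (a+1)) := by
  have ht0 : (0:ℝ) < t := by linarith
  have hkb := key_bound a μ t (t - u) ha1 ha0 hμ ht0 (by linarith)
  apply le_trans hkb
  apply add_le_add_right
  have hexp2 : Real.exp (-μ * t / 2) * t ≤ 2/μ := exp_decay_aux μ t hμ ht0.le
  have h2a : (0:ℝ) < 2 ^ (-a) := Real.rpow_pos_of_pos (by norm_num) _
  have ha1' : (0:ℝ) < a + 1 := by linarith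
  calc Real.exp (-μ * t / 2) * (2 ^ (-a) * (t / (a+1)))
      = (2 ^ (-a) / (a+1)) * (Real.exp (-μ * t / 2) * t) := by ring
    _ ≤ (2 ^ (-a) / (a+1)) * (2/μ) := mul_le_mul_of_nonneg_left hexp2 (by positivity)
    _ = 2 ^ (-a) * ((2/μ) / (a+1)) := by ring

lemma exp_integrableOn_Iic (m : ℝ) (hm : 0 < m) :
    IntegrableOn (fun u : ℝ => Real.exp (m * u)) (Iic 0) := by
  have A : MeasurableEmbedding fun x : ℝ => -x :=
    (Homeomorph.neg ℝ).isClosedEmbedding.measurableEmbedding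
  have h := exp_neg_integrableOn_Ioi 0 hm
  rw [IntegrableOn, ← Measure.map_neg_eq_self (volume : Measure ℝ),
    A.restrict_map, A.integrable_map_iff]
  have hpre : (fun x : ℝ => -x) ⁻¹' (Iic 0) = Ici 0 := by
    ext x; simp
  rw [hpre]
  have : ((fun u : ℝ => Real.exp (m * u)) ∘ fun x : ℝ => -x)
      = fun x : ℝ => Real.exp (-m * x) := by
    funext x; simp only [Function.comp]; ring_nf
  rw [this]
  exact (integrableOn_Ici_iff_integrableOn_Ioi).2 h

lemma exp_integral_Iic (m : ℝ) (hm : 0 < m) :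
    (∫ u in Iic (0:ℝ), Real.exp (m * u)) = 1 / m := by
  have := integral_comp_neg_Iic (0:ℝ) (fun x => Real.exp (-m * x))
  simp only [neg_zero] at this
  rw [← int_exp_Ioi m hm, ← this]
  apply setIntegral_congr_fun measurableSet_Iic
  intro x _
  simp only []
  ring_nf

/-- power-law asymptotics of the cross-covariance of two
stationary fractional Ornstein–Uhlenbeck processes:
`t^{2−2H} · H(2H−1)⁻¹ E[Z_0^m Z_t^{m'}] → 1/(m m')`. -/
theorem statement_19 (H m m' : ℝ) (hH : 1 / 2 < H) (hH1 : H < 1)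
    (hm : 0 < m) (hm' : 0 < m') :
    Filter.Tendsto
      (fun t : ℝ =>
        t ^ (2 - 2 * H) *
          ∫ u in Set.Iic (0 : ℝ), ∫ v in Set.Iic t,
            Real.exp (m * u) * Real.exp (-m' * (t - v)) * |v - u| ^ (2 * H - 2))
      Filter.atTop (nhds (1 / (m * m'))) := by
  set a : ℝ := 2 * H - 2 with ha
  have ha1 : -1 < a := by rw [ha]; linarith
  have ha0 : a < 0 := by rw [ha]; linarith
  set G : ℝ → ℝ → ℝ := fun t u =>
    ∫ s in Ioi (0:ℝ), Real.exp (-m' * s) * (t ^ (-a) * |t - u - s| ^ a) with hG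
  have hA : ∀ t : ℝ, t ^ (2 - 2 * H) *
      (∫ u in Iic (0:ℝ), ∫ v in Iic t,
        Real.exp (m * u) * Real.exp (-m' * (t - v)) * |v - u| ^ a)
      = ∫ u in Iic (0:ℝ), Real.exp (m * u) * G t u := by
    intro t
    have hinner : ∀ u : ℝ, (∫ v in Iic t,
        Real.exp (m * u) * Real.exp (-m' * (t - v)) * |v - u| ^ a)
        = Real.exp (m * u) * ∫ s in Ioi (0:ℝ), Real.exp (-m' * s) * |t - u - s| ^ a := by
      intro u
      rw [integral_Iic_comp_sub t
        (fun v => Real.exp (m * u) * Real.exp (-m' * (t - v)) * |v - u| ^ a),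
        ← integral_const_mul]
      apply integral_congr_ae (ae_of_all _ ?_)
      intro s
      rw [sub_sub_cancel, sub_right_comm]
      ring
    calc t ^ (2 - 2 * H) * (∫ u in Iic (0:ℝ), ∫ v in Iic t,
          Real.exp (m * u) * Real.exp (-m' * (t - v)) * |v - u| ^ a)
        = t ^ (-a) * ∫ u in Iic (0:ℝ),
            Real.exp (m * u) * ∫ s in Ioi (0:ℝ), Real.exp (-m' * s) * |t - u - s| ^ a := by
          rw [show (2 - 2 * H) = -a by rw [ha]; ring]
          congr 1
          exact integral_congr_ae (ae_of_all _ hinner)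
      _ = ∫ u in Iic (0:ℝ), t ^ (-a) *
            (Real.exp (m * u) * ∫ s in Ioi (0:ℝ), Real.exp (-m' * s) * |t - u - s| ^ a) :=
          (integral_const_mul _ _).symm
      _ = ∫ u in Iic (0:ℝ), Real.exp (m * u) * G t u := by
          apply integral_congr_ae (ae_of_all _ ?_)
          intro u
          rw [show t ^ (-a) * (Real.exp (m * u)
              * ∫ s in Ioi (0:ℝ), Real.exp (-m' * s) * |t - u - s| ^ a)
            = Real.exp (m * u) * (t ^ (-a)
              * ∫ s in Ioi (0:ℝ), Real.exp (-m' * s) * |t - u - s| ^ a) from by ring]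
          congr 1
          rw [hG]
          simp only []
          rw [← integral_const_mul]
          apply integral_congr_ae (ae_of_all _ fun s => by ring)
  set C : ℝ := 2 ^ (-a) / m' + 2 ^ (-a) * ((2/m') / (a+1)) with hC
  have key : Tendsto (fun t => ∫ u in Iic (0:ℝ), Real.exp (m * u) * G t u)
      atTop (nhds (∫ u in Iic (0:ℝ), Real.exp (m * u) * (1/m'))) := by
    apply tendsto_integral_filter_of_dominated_convergence
      (bound := fun u => Real.exp (m * u) * C)
    · filter_upwards with t
      have hmeas : Measurable (fun p : ℝ × ℝ =>
          Real.exp (-m' * p.2) * (t ^ (-a) * |t - p.1 - p.2| ^ a)) := by fun_prop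
      have hGm : AEStronglyMeasurable (fun u => G t u) (volume.restrict (Iic 0)) :=
        (hmeas.aestronglyMeasurable).integral_prod_right'
      have hexp : Continuous (fun u : ℝ => Real.exp (m * u)) :=
        Real.continuous_exp.comp (continuous_const.mul continuous_id)
      exact (hexp.aestronglyMeasurable).mul hGm
    · filter_upwards [eventually_ge_atTop (1:ℝ)] with t ht
      filter_upwards [ae_restrict_mem measurableSet_Iic] with u hu
      have ht0 : (0:ℝ) ≤ t := by linarith
      have hG0 : 0 ≤ G t u := by
        apply integral_nonneg
        intro s
        exact mul_nonneg (Real.exp_nonneg _)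
          (mul_nonneg (Real.rpow_nonneg ht0 _) (Real.rpow_nonneg (abs_nonneg _) _))
      rw [Real.norm_of_nonneg (mul_nonneg (Real.exp_nonneg _) hG0)]
      exact mul_le_mul_of_nonneg_left (phi_bound a m' t u ha1 ha0 hm' ht hu)
        (Real.exp_nonneg _)
    · exact (exp_integrableOn_Iic m hm).mul_const C
    · filter_upwards [ae_restrict_mem measurableSet_Iic] with u hu
      exact (inner_tendsto a m' u ha1 ha0 hm' hu).const_mul (Real.exp (m * u))
  have hval : (∫ u in Iic (0:ℝ), Real.exp (m * u) * (1/m')) = 1 / (m * m') := by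
    rw [integral_mul_const, exp_integral_Iic m hm]
    rw [div_mul_div_comm, one_mul]
  rw [hval] at key
  exact key.congr (fun t => (hA t).symm)
end
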